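/- arXiv:1508.03154 — 3 statements merged into one kernel-verified Lean document; each statement's English description precedes it below -/
import Mathlib

section
/- Suppose f is irreducible in ℤ[u^{±1}], noncyclotomic, and hyperbolic. Then w^Δ := w⁺ = w⁻ satisfies lim_{|n|→∞} w^Δ_n = 0, the point x^Δ := ρ(w^Δ) ∈ X_f is homoclinic for α_f, and every homoclinic point x of α_f has the form x = Σ_{n∈ℤ} h_n · α_f^n(x^Δ) for some finitely supported function h : ℤ → ℤ; in particular the subgroup of X_f generated by the α_f-orbit of x^Δ equals the group Δ_{α_f}(X_f) of all homoclinic points. -/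
open Filter Topology Polynomial

noncomputable section

/-- The circle `ℝ/ℤ`. -/
abbrev Torus := AddCircle (1 : ℝ)

/-- `f(σ)` acting on `𝕋^ℤ`. -/
def fsT (f : Polynomial ℤ) (x : ℤ → Torus) : ℤ → Torus :=
  fun n => ∑ k ∈ Finset.range (f.natDegree + 1), f.coeff k • x (n + (k : ℤ))

/-- `X_f = ker f(σ) ⊆ 𝕋^ℤ`. -/
def Xf (f : Polynomial ℤ) : Set (ℤ → Torus) := {x | ∀ n, fsT f x n = 0}

/-- `σ^k` on `𝕋^ℤ` (the `k`-th power of the shift, `k ∈ ℤ`). -/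
def shiftIterT (k : ℤ) (x : ℤ → Torus) : ℤ → Torus := fun n => x (n + k)

/-- A point of `𝕋^ℤ` is homoclinic (to `0`) if `σ^k x → 0` as `|k| → ∞`. -/
def HomoclinicT (x : ℤ → Torus) : Prop :=
  Tendsto (fun k : ℤ => shiftIterT k x) cofinite (nhds 0)

/-- `f(σ̄)` on real sequences. -/
def fsR (f : Polynomial ℤ) (w : ℤ → ℝ) : ℤ → ℝ :=
  fun n => ∑ k ∈ Finset.range (f.natDegree + 1), (f.coeff k : ℝ) * w (n + (k : ℤ))

/-- Bounded real sequences. -/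
def Bdd (w : ℤ → ℝ) : Prop := ∃ B : ℝ, ∀ n, |w n| ≤ B

/-- The sequence `v^Δ`. -/
def vDelta : ℤ → ℝ := fun n => if n = 0 then 1 else 0

/-- Coordinatewise reduction mod 1, `ρ : ℓ^∞(ℤ,ℝ) → 𝕋^ℤ`. -/
def rhoT (w : ℤ → ℝ) : ℤ → Torus := fun n => (w n : Torus)

/-- `f` is noncyclotomic. -/
def Noncyclotomic (f : Polynomial ℤ) : Prop :=
  ∀ θ : ℂ, Polynomial.aeval θ f = 0 → ∀ n : ℕ, 0 < n → θ ^ n ≠ 1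

/-- `w⁺`. -/
def IsWplus (f : Polynomial ℤ) (w : ℤ → ℝ) : Prop :=
  Bdd w ∧ fsR f w = vDelta ∧ Tendsto w atTop (nhds 0)

/-- `w⁻`. -/
def IsWminus (f : Polynomial ℤ) (w : ℤ → ℝ) : Prop :=
  Bdd w ∧ fsR f w = vDelta ∧ Tendsto w atBot (nhds 0)

/-! ### Auxiliary material: the shift operator on complex sequences -/

private def shiftC : Module.End ℂ (ℤ → ℂ) where
  toFun v := fun n => v (n + 1)
  map_add' _ _ := rfl
  map_smul' _ _ := rfl

private def BddC (v : ℤ → ℂ) : Prop := ∃ B : ℝ, ∀ n, ‖v n‖ ≤ B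

private lemma shiftC_pow (k : ℕ) (v : ℤ → ℂ) (n : ℤ) : (shiftC ^ k) v n = v (n + k) := by
  induction k generalizing v n with
  | zero => simp
  | succ k ih =>
    have h : (shiftC ^ (k+1)) v = (shiftC ^ k) (shiftC v) := by
      rw [pow_succ]; rfl
    rw [h, ih]
    show v (n + k + 1) = v (n + (k+1 : ℕ))
    congr 1; push_cast; ring

private lemma factor_apply (θ : ℂ) (v : ℤ → ℂ) (n : ℤ) :
    ((shiftC - θ • 1) v) n = v (n + 1) - θ * v n := by
  simp [shiftC, LinearMap.sub_apply]

private lemma factor_bdd (θ : ℂ) {v : ℤ → ℂ} (hv : BddC v) : BddC ((shiftC - θ • 1) v) := by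
  obtain ⟨B, hB⟩ := hv
  refine ⟨B + ‖θ‖ * B, fun n => ?_⟩
  rw [factor_apply]
  calc ‖v (n+1) - θ * v n‖ ≤ ‖v (n+1)‖ + ‖θ * v n‖ :=
        norm_sub_le _ _
    _ ≤ B + ‖θ‖ * B := by
        rw [norm_mul]
        exact add_le_add (hB _) (mul_le_mul_of_nonneg_left (hB _) (norm_nonneg _))

private lemma geom_zero {θ : ℂ} (hθ0 : θ ≠ 0) (hθ1 : ‖θ‖ ≠ 1)
    {g : ℤ → ℂ} (hbd : BddC g) (hrec : ∀ n : ℤ, g (n+1) = θ * g n) : g = 0 := by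
  have key : ∀ n : ℤ, g n = θ ^ n * g 0 := by
    intro n
    induction n using Int.induction_on with
    | zero => simp
    | succ k ih =>
      rw [hrec, ih, ← mul_assoc, mul_comm θ (θ^(k:ℤ)), ← zpow_add_one₀ hθ0]
    | pred k ih =>
      have h2 := hrec (-(k:ℤ) - 1)
      rw [sub_add_cancel] at h2
      have h3 : g (-(k:ℤ) - 1) = θ⁻¹ * g (-(k:ℤ)) := by
        rw [h2, ← mul_assoc, inv_mul_cancel₀ hθ0, one_mul]
      rw [h3, ih, ← mul_assoc, mul_comm θ⁻¹ (θ^(-(k:ℤ))), ← zpow_sub_one₀ hθ0]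
  by_contra hg
  have hg0 : g 0 ≠ 0 := by
    intro h; apply hg; funext n; rw [key n, h, mul_zero]; rfl
  obtain ⟨B, hB⟩ := hbd
  have habs : ∀ n : ℤ, ‖g n‖ = ‖θ‖ ^ n * ‖g 0‖ := by
    intro n; rw [key n, norm_mul, norm_zpow]
  have hg0pos : 0 < ‖g 0‖ := norm_pos_iff.mpr hg0
  have hθpos : 0 < ‖θ‖ := norm_pos_iff.mpr hθ0
  rcases hθ1.lt_or_gt with hlt | hgt
  · have hinv : 1 < ‖θ‖⁻¹ := (one_lt_inv₀ hθpos).mpr hlt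
    obtain ⟨N, hN⟩ := pow_unbounded_of_one_lt (B / ‖g 0‖) hinv
    have h1 : B < ‖θ‖⁻¹ ^ N * ‖g 0‖ := by
      rw [div_lt_iff₀ hg0pos] at hN; linarith
    have h2 := hB (-(N:ℤ))
    rw [habs, zpow_neg, zpow_natCast, ← inv_pow] at h2
    linarith
  · obtain ⟨N, hN⟩ := pow_unbounded_of_one_lt (B / ‖g 0‖) hgt
    have h1 : B < ‖θ‖ ^ N * ‖g 0‖ := by
      rw [div_lt_iff₀ hg0pos] at hN; linarith
    have h2 := hB (N:ℤ)
    rw [habs, zpow_natCast] at h2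
    linarith

private lemma list_prod_bdd (L : List ℂ) : ∀ v : ℤ → ℂ, BddC v →
    BddC ((L.map fun θ => shiftC - θ • 1).prod v) := by
  induction L with
  | nil => intro v hv; simpa using hv
  | cons θ L ih =>
    intro v hv
    rw [List.map_cons, List.prod_cons]
    have := factor_bdd θ (ih v hv)
    simpa [Module.End.mul_apply] using this

private lemma list_prod_zero (L : List ℂ) (hM : ∀ θ ∈ L, θ ≠ 0 ∧ ‖θ‖ ≠ 1) :
    ∀ v : ℤ → ℂ, BddC v → (L.map fun θ => shiftC - θ • 1).prod v = 0 → v = 0 := by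
  induction L with
  | nil => intro v _ h; simpa using h
  | cons θ L ih =>
    intro v hv h
    rw [List.map_cons, List.prod_cons] at h
    set g := (L.map fun θ => shiftC - θ • 1).prod v with hg
    have hgb : BddC g := list_prod_bdd L v hv
    obtain ⟨hθ0, hθ1⟩ := hM θ (List.mem_cons_self)
    have hz : g = 0 := by
      apply geom_zero hθ0 hθ1 hgb
      intro n
      have h2 : ((shiftC - θ • 1) g) n = 0 := by
        rw [show (shiftC - θ • 1) g = 0 from h]; rfl
      rw [factor_apply] at h2
      linear_combination h2
    exact ih (fun θ' hθ' => hM θ' (List.mem_cons_of_mem _ hθ')) v hv hz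

private lemma aeval_shiftC_apply (f : Polynomial ℤ) (v : ℤ → ℂ) (n : ℤ) :
    (Polynomial.aeval shiftC f) v n
      = ∑ k ∈ Finset.range (f.natDegree + 1), (f.coeff k : ℂ) * v (n + (k : ℤ)) := by
  rw [Polynomial.aeval_eq_sum_range]
  have h : ((∑ i ∈ Finset.range (f.natDegree + 1), f.coeff i • shiftC ^ i) v)
      = ∑ i ∈ Finset.range (f.natDegree + 1), (f.coeff i • (shiftC ^ i) v) := by
    rw [LinearMap.coe_sum]; simp
  rw [h, Finset.sum_apply]
  refine Finset.sum_congr rfl fun k _ => ?_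
  rw [Pi.smul_apply, shiftC_pow, zsmul_eq_mul]

private lemma aeval_bdd_zero (f : Polynomial ℤ) (hf : f ≠ 0) (h0 : f.coeff 0 ≠ 0)
    (hhyp : ∀ θ : ℂ, Polynomial.aeval θ f = 0 → ‖θ‖ ≠ 1)
    (v : ℤ → ℂ) (hv : BddC v) (hker : Polynomial.aeval shiftC f v = 0) : v = 0 := by
  set fC : Polynomial ℂ := f.map (Int.castRingHom ℂ) with hfC
  have hfC0 : fC ≠ 0 := by
    rw [hfC, Ne, Polynomial.map_eq_zero_iff (f := Int.castRingHom ℂ) (fun a b h => by simpa using h)]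
    exact hf
  have hroots : ∀ θ ∈ fC.roots, θ ≠ 0 ∧ ‖θ‖ ≠ 1 := by
    intro θ hθ
    have hroot : Polynomial.aeval θ f = 0 := by
      have h2 : Polynomial.eval θ fC = 0 := (Polynomial.mem_roots hfC0).1 hθ
      rw [Polynomial.aeval_def, algebraMap_int_eq]
      rwa [hfC, ← Polynomial.eval₂_eq_eval_map] at h2
    refine ⟨?_, hhyp θ hroot⟩
    intro h
    rw [h, Polynomial.aeval_def, algebraMap_int_eq, Polynomial.eval₂_at_zero] at hroot
    exact h0 (by simpa using hroot)
  have hsplit : fC.Splits := IsAlgClosed.splits _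
  have hfact : fC = Polynomial.C fC.leadingCoeff
      * (fC.roots.map fun a => Polynomial.X - Polynomial.C a).prod :=
    hsplit.eq_prod_roots
  set L := fC.roots.toList with hL
  have hLprod : (fC.roots.map fun a => Polynomial.X - Polynomial.C a).prod
      = ((L.map fun a => Polynomial.X - Polynomial.C a)).prod := by
    conv_lhs => rw [← Multiset.coe_toList fC.roots]
    rw [Multiset.map_coe, Multiset.prod_coe]
  have haev : Polynomial.aeval shiftC f = Polynomial.aeval shiftC fC := by
    rw [hfC, ← algebraMap_int_eq, Polynomial.aeval_map_algebraMap]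
  have hdecomp : Polynomial.aeval shiftC fC
      = fC.leadingCoeff • ((L.map fun θ => shiftC - θ • 1).prod) := by
    conv_lhs => rw [hfact]
    rw [map_mul, Polynomial.aeval_C, hLprod, map_list_prod]
    rw [List.map_map]
    have hmap : (fun a => Polynomial.aeval shiftC (Polynomial.X - Polynomial.C a))
        = (fun θ : ℂ => shiftC - θ • 1) := by
      funext θ
      rw [map_sub, Polynomial.aeval_X, Polynomial.aeval_C]
      rfl
    rw [Function.comp_def, hmap, ← Algebra.smul_def]
  rw [haev, hdecomp] at hker
  have hlead : fC.leadingCoeff ≠ 0 := Polynomial.leadingCoeff_ne_zero.mpr hfC0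
  have hprod : (L.map fun θ => shiftC - θ • 1).prod v = 0 := by
    have h3 : fC.leadingCoeff • ((L.map fun θ => shiftC - θ • 1).prod v) = 0 := by
      rw [← hker]; rfl
    rcases smul_eq_zero.1 h3 with h | h
    · exact absurd h hlead
    · exact h
  exact list_prod_zero L
    (fun θ hθ => hroots θ (by rwa [hL, Multiset.mem_toList] at hθ)) v hv hprod

/-- Uniqueness of bounded solutions: real version. -/
private lemma bdd_ker_zero (f : Polynomial ℤ) (hf : f ≠ 0) (h0 : f.coeff 0 ≠ 0)
    (hhyp : ∀ θ : ℂ, Polynomial.aeval θ f = 0 → ‖θ‖ ≠ 1)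
    (d : ℤ → ℝ) (hbd : Bdd d) (hker : fsR f d = 0) : d = 0 := by
  set v : ℤ → ℂ := fun n => (d n : ℂ) with hv
  have hvb : BddC v := by
    obtain ⟨B, hB⟩ := hbd
    exact ⟨B, fun n => by simpa [hv] using hB n⟩
  have hkerC : Polynomial.aeval shiftC f v = 0 := by
    funext n
    rw [aeval_shiftC_apply]
    have h2 : fsR f d n = 0 := by rw [hker]; rfl
    unfold fsR at h2
    calc (∑ k ∈ Finset.range (f.natDegree + 1), (f.coeff k : ℂ) * v (n + (k : ℤ)))
        = ((∑ k ∈ Finset.range (f.natDegree + 1), (f.coeff k : ℝ) * d (n + (k : ℤ)) : ℝ) : ℂ) := by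
          push_cast; rfl
      _ = 0 := by rw [h2]; rfl
  have hv0 := aeval_bdd_zero f hf h0 hhyp v hvb hkerC
  funext n
  have h4 : ((d n : ℝ) : ℂ) = 0 := by
    have h5 := congrFun hv0 n
    simpa [hv] using h5
  show d n = (0:ℝ)
  exact_mod_cast h4

/-! ### Torus utilities -/

private def torusMk : ℝ →+ Torus := QuotientAddGroup.mk' (AddSubgroup.zmultiples (1:ℝ))

private lemma torusMk_apply (r : ℝ) : torusMk r = (r : Torus) := rfl

private lemma fsT_rhoT (f : Polynomial ℤ) (w : ℤ → ℝ) (n : ℤ) :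
    fsT f (rhoT w) n = ((fsR f w n : ℝ) : Torus) := by
  unfold fsT fsR rhoT
  rw [← torusMk_apply, map_sum]
  refine Finset.sum_congr rfl fun k _ => ?_
  rw [← torusMk_apply, ← map_zsmul]
  congr 1
  rw [zsmul_eq_mul]

private lemma torus_coe_continuous : Continuous (fun r : ℝ => (r : Torus)) :=
  AddCircle.continuous_mk' 1

private lemma torus_int_of_zero {r : ℝ} (h : (r : Torus) = 0) : ∃ z : ℤ, (z : ℝ) = r := by
  rw [AddCircle.coe_eq_zero_iff] at h
  obtain ⟨z, hz⟩ := h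
  exact ⟨z, by simpa using hz⟩

instance : Fact ((0:ℝ) < 1) := ⟨one_pos⟩

private def liftT (t : Torus) : ℝ := (AddCircle.equivIco 1 (-(1/2)) t : ℝ)

private lemma liftT_coe (t : Torus) : ((liftT t : ℝ) : Torus) = t :=
  (AddCircle.equivIco 1 (-(1/2))).symm_apply_apply t

private lemma liftT_bdd (t : Torus) : |liftT t| ≤ 1 := by
  unfold liftT
  have h := (AddCircle.equivIco 1 (-(1/2)) t).2
  obtain ⟨h1, h2⟩ := h
  rw [abs_le]
  constructor <;> [linarith; linarith]

private lemma half_ne_zero_torus : (0 : Torus) ≠ ((-(1/2) : ℝ) : Torus) := by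
  intro h
  have h2 : ((-(1/2) : ℝ) : Torus) = 0 := h.symm
  rw [AddCircle.coe_eq_zero_iff] at h2
  obtain ⟨z, hz⟩ := h2
  rw [zsmul_eq_mul, mul_one] at hz
  have h3 : (2 * z : ℤ) = (-1 : ℤ) := by
    have : (2 * z : ℝ) = -1 := by linarith
    exact_mod_cast this
  omega

private lemma liftT_zero : liftT 0 = 0 := by
  have hmem : (0:ℝ) ∈ Set.Ico (-(1/2):ℝ) (-(1/2) + 1) := by constructor <;> norm_num
  have h1 : ((liftT 0 : ℝ) : Torus) = ((0:ℝ) : Torus) := by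
    rw [liftT_coe]; norm_num
  have h2 := (AddCircle.coe_eq_coe_iff_of_mem_Ico
    ((AddCircle.equivIco 1 (-(1/2)) 0).2) hmem).1 h1
  exact h2

private lemma liftT_continuousAt : ContinuousAt liftT 0 := by
  have h := AddCircle.continuousAt_equivIco (p := 1) (a := -(1/2)) half_ne_zero_torus
  exact (continuous_subtype_val.continuousAt).comp h

/-! ### fsR algebra -/

private lemma fsR_sub (f : Polynomial ℤ) (v u : ℤ → ℝ) (n : ℤ) :
    fsR f (v - u) n = fsR f v n - fsR f u n := by
  unfold fsR
  rw [← Finset.sum_sub_distrib]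
  exact Finset.sum_congr rfl fun k _ => by simp [mul_sub]

private lemma fsR_shift (f : Polynomial ℤ) (w : ℤ → ℝ) (m n : ℤ) :
    fsR f (fun j => w (j + m)) n = fsR f w (n + m) := by
  unfold fsR
  exact Finset.sum_congr rfl fun k _ => by rw [add_right_comm]

private lemma fsR_const_mul (f : Polynomial ℤ) (c : ℝ) (w : ℤ → ℝ) (n : ℤ) :
    fsR f (fun j => c * w j) n = c * fsR f w n := by
  unfold fsR
  rw [Finset.mul_sum]
  exact Finset.sum_congr rfl fun k _ => by ring

private lemma fsR_finset_sum {ι : Type*} (f : Polynomial ℤ) (s : Finset ι) (F : ι → ℤ → ℝ) (n : ℤ) :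
    fsR f (∑ i ∈ s, F i) n = ∑ i ∈ s, fsR f (F i) n := by
  unfold fsR
  simp only [Finset.sum_apply, Finset.mul_sum]
  exact Finset.sum_comm

/-! ### shift and homoclinicity -/

private lemma shiftIterT_comp (k m : ℤ) (x : ℤ → Torus) :
    shiftIterT k (shiftIterT m x) = shiftIterT (k + m) x := by
  funext n
  show x (n + k + m) = x (n + (k + m))
  rw [add_assoc]

private lemma fsT_add (f : Polynomial ℤ) (x y : ℤ → Torus) (n : ℤ) :
    fsT f (x + y) n = fsT f x n + fsT f y n := by
  unfold fsT
  rw [← Finset.sum_add_distrib]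
  exact Finset.sum_congr rfl fun k _ => by rw [Pi.add_apply, smul_add]

private lemma fsT_neg (f : Polynomial ℤ) (x : ℤ → Torus) (n : ℤ) :
    fsT f (-x) n = -fsT f x n := by
  unfold fsT
  rw [← Finset.sum_neg_distrib]
  exact Finset.sum_congr rfl fun k _ => by rw [Pi.neg_apply, smul_neg]

private lemma fsT_zero (f : Polynomial ℤ) (n : ℤ) : fsT f (0 : ℤ → Torus) n = 0 := by
  unfold fsT
  exact Finset.sum_eq_zero fun k _ => smul_zero _

private lemma fsT_shift (f : Polynomial ℤ) (x : ℤ → Torus) (m n : ℤ) :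
    fsT f (shiftIterT m x) n = fsT f x (n + m) := by
  unfold fsT shiftIterT
  exact Finset.sum_congr rfl fun k _ => by rw [add_right_comm]

private lemma homoclinic_add {x y : ℤ → Torus} (hx : HomoclinicT x) (hy : HomoclinicT y) :
    HomoclinicT (x + y) := by
  have h : ∀ k : ℤ, shiftIterT k (x + y) = shiftIterT k x + shiftIterT k y := fun k => rfl
  unfold HomoclinicT
  simp only [h]
  have := hx.add hy
  simpa using this

private lemma homoclinic_neg {x : ℤ → Torus} (hx : HomoclinicT x) : HomoclinicT (-x) := by
  have h : ∀ k : ℤ, shiftIterT k (-x) = -(shiftIterT k x) := fun k => rfl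
  unfold HomoclinicT
  simp only [h]
  have := hx.neg
  simpa using this

private lemma homoclinic_zero : HomoclinicT (0 : ℤ → Torus) := by
  unfold HomoclinicT
  have h : ∀ k : ℤ, shiftIterT k (0 : ℤ → Torus) = 0 := fun k => rfl
  simp only [h]
  exact tendsto_const_nhds

private lemma homoclinic_shift {x : ℤ → Torus} (hx : HomoclinicT x) (m : ℤ) :
    HomoclinicT (shiftIterT m x) := by
  unfold HomoclinicT
  simp only [shiftIterT_comp]
  exact hx.comp ((add_left_injective m).tendsto_cofinite)

private lemma homoclinic_coord {x : ℤ → Torus} (hx : HomoclinicT x) :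
    Tendsto x cofinite (nhds 0) := by
  have h := (tendsto_pi_nhds.1 hx) 0
  simpa [shiftIterT] using h

private lemma homoclinic_of_coord {x : ℤ → Torus} (hx : Tendsto x cofinite (nhds 0)) :
    HomoclinicT x := by
  rw [HomoclinicT, tendsto_pi_nhds]
  intro n
  have h1 : Tendsto (fun k : ℤ => n + k) cofinite cofinite :=
    (add_right_injective n).tendsto_cofinite
  have h2 : Tendsto (fun k : ℤ => x (n + k)) cofinite (nhds 0) := hx.comp h1
  exact h2


private def homSubgroup (f : Polynomial ℤ) : AddSubgroup (ℤ → Torus) where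
  carrier := {x | x ∈ Xf f ∧ HomoclinicT x}
  zero_mem' := ⟨fun n => fsT_zero f n, homoclinic_zero⟩
  add_mem' := fun ha hb =>
    ⟨fun n => by rw [fsT_add, ha.1 n, hb.1 n, add_zero], homoclinic_add ha.2 hb.2⟩
  neg_mem' := fun ha => ⟨fun n => by rw [fsT_neg, ha.1 n, neg_zero], homoclinic_neg ha.2⟩

/-- if `f` is irreducible in `ℤ[u^{±1}]`, noncyclotomic and hyperbolic, then
`w^Δ := w⁺ = w⁻` satisfies `w^Δ_n → 0` as `|n| → ∞`, the point `x^Δ = ρ(w^Δ)` is a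
homoclinic point of `α_f`, and every homoclinic point of `α_f` is a finite integer
combination `∑_n h_n α_f^n(x^Δ)`; in particular the subgroup generated by the orbit of
`x^Δ` is the group of all homoclinic points. -/
theorem fundamental_homoclinic_point (f : Polynomial ℤ) (hm : 1 ≤ f.natDegree)
    (hlead : 0 < f.leadingCoeff) (h0 : f.coeff 0 ≠ 0)
    (hirr : Irreducible (Polynomial.toLaurent f)) (hnc : Noncyclotomic f)
    (hhyp : ∀ θ : ℂ, Polynomial.aeval θ f = 0 → ‖θ‖ ≠ 1)
    (wp wm : ℤ → ℝ) (hwp : IsWplus f wp) (hwm : IsWminus f wm) :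
    wp = wm ∧
    Tendsto wp cofinite (nhds 0) ∧
    rhoT wp ∈ Xf f ∧
    HomoclinicT (rhoT wp) ∧
    (∀ x ∈ Xf f, HomoclinicT x →
      ∃ h : ℤ →₀ ℤ, x = h.sum fun n c => c • shiftIterT n (rhoT wp)) ∧
    ((AddSubgroup.closure (Set.range fun n : ℤ => shiftIterT n (rhoT wp)) : Set (ℤ → Torus))
      = {x | x ∈ Xf f ∧ HomoclinicT x}) := by
  classical
  have hf0 : f ≠ 0 := fun h => by simp [h] at hlead
  -- Part 1 : wp = wm
  have hdiff1 : fsR f (wp - wm) = 0 := by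
    funext n
    rw [fsR_sub]
    rw [hwp.2.1, hwm.2.1, sub_self]
    rfl
  have hbd1 : Bdd (wp - wm) := by
    obtain ⟨B1, hB1⟩ := hwp.1
    obtain ⟨B2, hB2⟩ := hwm.1
    refine ⟨B1 + B2, fun n => ?_⟩
    rw [Pi.sub_apply]
    exact le_trans (abs_sub (wp n) (wm n)) (add_le_add (hB1 n) (hB2 n))
  have heq : wp = wm := by
    have := bdd_ker_zero f hf0 h0 hhyp (wp - wm) hbd1 hdiff1
    exact sub_eq_zero.1 this
  -- Part 2 : decay
  have h2 : Tendsto wp cofinite (nhds 0) := by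
    rw [Int.cofinite_eq, tendsto_sup]
    exact ⟨heq ▸ hwm.2.2, hwp.2.2⟩
  -- Part 3
  have hXfm : rhoT wp ∈ Xf f := by
    intro n
    rw [fsT_rhoT, hwp.2.1]
    unfold vDelta
    by_cases hn : n = 0
    · simp only [hn, if_pos rfl]
      rw [AddCircle.coe_eq_zero_iff]
      exact ⟨1, by simp⟩
    · simp only [if_neg hn]
      rfl
  -- Part 4
  have hhom : HomoclinicT (rhoT wp) := by
    apply homoclinic_of_coord
    have hcont : Tendsto (fun r : ℝ => (r : Torus)) (nhds 0) (nhds 0) := by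
      have := torus_coe_continuous.tendsto 0
      simpa using this
    exact hcont.comp h2
  -- Part 5
  have main : ∀ x ∈ Xf f, HomoclinicT x →
      ∃ h : ℤ →₀ ℤ, x = h.sum fun n c => c • shiftIterT n (rhoT wp) := by
    intro x hx hxh
    set w : ℤ → ℝ := fun n => liftT (x n) with hw
    have hwx : ∀ n, ((w n : ℝ) : Torus) = x n := fun n => liftT_coe (x n)
    have hwbdd : Bdd w := ⟨1, fun n => liftT_bdd (x n)⟩
    have hx0 : Tendsto x cofinite (nhds 0) := homoclinic_coord hxh
    have hw0 : Tendsto w cofinite (nhds 0) := by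
      have h3 := liftT_continuousAt.tendsto.comp hx0
      rw [liftT_zero] at h3
      exact h3
    set g : ℤ → ℝ := fsR f w with hg
    have hgint : ∀ n, ∃ z : ℤ, (z : ℝ) = g n := by
      intro n
      apply torus_int_of_zero
      show ((fsR f w n : ℝ) : Torus) = 0
      rw [← fsT_rhoT]
      have hrw : rhoT w = x := funext hwx
      rw [hrw]
      exact hx n
    have hg0 : Tendsto g cofinite (nhds 0) := by
      have h5 : Tendsto (fun n : ℤ => ∑ k ∈ Finset.range (f.natDegree+1),
          (f.coeff k : ℝ) * w (n + (k:ℤ))) cofinite (nhds 0) := by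
        have h6 : (0:ℝ) = ∑ _k ∈ Finset.range (f.natDegree+1), (0:ℝ) := by simp
        rw [h6]
        apply tendsto_finset_sum
        intro k _
        have h7 : Tendsto (fun n : ℤ => n + (k:ℤ)) cofinite cofinite :=
          (add_left_injective _).tendsto_cofinite
        have h8 := (hw0.comp h7).const_mul ((f.coeff k : ℝ))
        simpa using h8
      exact h5
    have hfin : {n : ℤ | g n ≠ 0}.Finite := by
      have hev := Metric.tendsto_nhds.1 hg0 1 one_pos
      rw [eventually_cofinite] at hev
      apply hev.subset
      intro n hn hlt
      obtain ⟨z, hz⟩ := hgint n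
      rw [Real.dist_eq, sub_zero, ← hz] at hlt
      have hza : |z| < 1 := by exact_mod_cast hlt
      have hz0 : z = 0 := Int.abs_lt_one_iff.1 hza
      exact hn (by rw [← hz, hz0]; norm_num)
    have hfin2 : {n : ℤ | (fun n => round (g (-n))) n ≠ 0}.Finite := by
      apply (hfin.preimage (f := Neg.neg) neg_injective.injOn).subset
      intro n hn
      simp only [Set.mem_preimage, Set.mem_setOf_eq]
      intro hgz
      apply hn
      show round (g (-n)) = 0
      rw [hgz, round_zero]
    set h : ℤ →₀ ℤ := Finsupp.onFinset hfin2.toFinset (fun n => round (g (-n)))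
      (fun n hn => hfin2.mem_toFinset.2 hn) with hhdef
    have happ : ∀ n, h n = round (g (-n)) := fun n => rfl
    have hcast : ∀ n, ((h n : ℤ) : ℝ) = g (-n) := by
      intro n
      obtain ⟨z, hz⟩ := hgint (-n)
      rw [happ, ← hz, round_intCast]
    set w' : ℤ → ℝ := h.sum (fun n c => fun j => (c:ℝ) * wp (j + n)) with hw'
    have hw'app : ∀ j, w' j = ∑ n ∈ h.support, ((h n : ℤ) : ℝ) * wp (j + n) := by
      intro j
      rw [hw', Finsupp.sum, Finset.sum_apply]
    have hfsw' : ∀ j, fsR f w' j = g j := by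
      intro j
      rw [hw', Finsupp.sum, fsR_finset_sum]
      have hterm : ∀ n ∈ h.support,
          fsR f (fun j' => ((h n : ℤ):ℝ) * wp (j' + n)) j = ((h n : ℤ):ℝ) * vDelta (j + n) := by
        intro n _
        rw [fsR_const_mul f ((h n : ℤ):ℝ) (fun j' => wp (j' + n)) j, fsR_shift]
        rw [hwp.2.1]
      rw [Finset.sum_congr rfl hterm]
      have hvd : ∀ n : ℤ, vDelta (j + n) = if n = -j then (1:ℝ) else 0 := by
        intro n
        unfold vDelta
        exact if_congr (by omega) rfl rfl
      calc (∑ n ∈ h.support, ((h n : ℤ):ℝ) * vDelta (j + n))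
          = ∑ n ∈ h.support, (if n = -j then ((h n : ℤ):ℝ) else 0) := by
            refine Finset.sum_congr rfl fun n _ => ?_
            rw [hvd n]
            by_cases hc : n = -j
            · rw [if_pos hc, if_pos hc, mul_one]
            · rw [if_neg hc, if_neg hc, mul_zero]
        _ = (if -j ∈ h.support then ((h (-j) : ℤ):ℝ) else 0) := Finset.sum_ite_eq' _ _ _
        _ = ((h (-j) : ℤ):ℝ) := by
            by_cases hc : -j ∈ h.support
            · rw [if_pos hc]
            · rw [if_neg hc, Finsupp.notMem_support_iff.1 hc]; simp
        _ = g j := by rw [hcast, neg_neg]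
    have hw'b : Bdd w' := by
      obtain ⟨B, hB⟩ := hwp.1
      refine ⟨∑ n ∈ h.support, |((h n : ℤ):ℝ)| * B, fun j => ?_⟩
      rw [hw'app]
      refine le_trans (Finset.abs_sum_le_sum_abs _ _) ?_
      refine Finset.sum_le_sum fun n _ => ?_
      rw [abs_mul]
      exact mul_le_mul_of_nonneg_left (hB _) (abs_nonneg _)
    have hbd2 : Bdd (w - w') := by
      obtain ⟨B1, hB1⟩ := hwbdd
      obtain ⟨B2, hB2⟩ := hw'b
      refine ⟨B1 + B2, fun n => ?_⟩
      rw [Pi.sub_apply]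
      exact le_trans (abs_sub (w n) (w' n)) (add_le_add (hB1 n) (hB2 n))
    have hdiff2 : fsR f (w - w') = 0 := by
      funext n
      rw [fsR_sub, hfsw' n]
      show g n - g n = 0
      exact sub_self _
    have hweq : w = w' :=
      sub_eq_zero.1 (bdd_ker_zero f hf0 h0 hhyp (w - w') hbd2 hdiff2)
    refine ⟨h, ?_⟩
    funext j
    have hxj : x j = ((w' j : ℝ) : Torus) := by rw [← hweq, hwx]
    rw [hxj, hw'app]
    rw [← torusMk_apply, map_sum]
    have hrhs : (h.sum fun n c => c • shiftIterT n (rhoT wp)) j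
        = ∑ n ∈ h.support, (h n) • ((wp (j + n) : ℝ) : Torus) := by
      rw [Finsupp.sum, Finset.sum_apply]
      rfl
    rw [hrhs]
    refine Finset.sum_congr rfl fun n _ => ?_
    rw [← zsmul_eq_mul, map_zsmul]
    rfl
  -- Part 6
  have hsubeq : ((AddSubgroup.closure (Set.range fun n : ℤ => shiftIterT n (rhoT wp))
      : AddSubgroup (ℤ → Torus)) : Set (ℤ → Torus)) = {x | x ∈ Xf f ∧ HomoclinicT x} := by
    apply Set.Subset.antisymm
    · have hle : AddSubgroup.closure (Set.range fun n : ℤ => shiftIterT n (rhoT wp))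
          ≤ homSubgroup f := by
        rw [AddSubgroup.closure_le]
        rintro y ⟨n, rfl⟩
        exact ⟨fun m => by rw [fsT_shift]; exact hXfm (m + n), homoclinic_shift hhom n⟩
      exact fun y hy => hle hy
    · intro x hx
      obtain ⟨h, hxe⟩ := main x hx.1 hx.2
      rw [SetLike.mem_coe, hxe, Finsupp.sum]
      exact AddSubgroup.sum_mem _ fun n _ =>
        AddSubgroup.zsmul_mem _ (AddSubgroup.subset_closure (Set.mem_range_self n)) _
  exact ⟨heq, h2, hXfm, hhom, main, hsubeq⟩

end
end

section
/- Suppose f is irreducible in ℤ[u^{±1}], noncyclotomic, and nonhyperbolic (i.e. f has a complex root of absolute value 1). Then α_f has no nonzero homoclinic points: if x ∈ X_f satisfies α_f^n x → 0 as |n| → ∞, then x = 0. -/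
open Filter Topology Polynomial

noncomputable section

section AuxiliaryLemmas

/-- `P(σ)` acting on two-sided sequences. -/
def seqOp {R : Type*} [CommRing R] (P : R[X]) (y : ℤ → R) : ℤ → R :=
  fun n => ∑ k ∈ Finset.range (P.natDegree + 1), P.coeff k * y (n + (k : ℤ))

variable {R : Type*} [CommRing R]

lemma seqOp_eq_sum (P : R[X]) (y : ℤ → R) {m : ℕ} (h : P.natDegree < m) (n : ℤ) :
    seqOp P y n = ∑ k ∈ Finset.range m, P.coeff k * y (n + (k : ℤ)) := by
  rw [seqOp]
  apply Finset.sum_subset (Finset.range_subset_range.2 h)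
  intro k hk hk2
  rw [Polynomial.coeff_eq_zero_of_natDegree_lt, zero_mul]
  simp only [Finset.mem_range] at hk2
  omega

lemma seqOp_one (y : ℤ → R) (n : ℤ) : seqOp (1 : R[X]) y n = y n := by
  simp [seqOp]

lemma seqOp_C_mul (a : R) (P : R[X]) (y : ℤ → R) (n : ℤ) :
    seqOp (C a * P) y n = a * seqOp P y n := by
  rw [seqOp_eq_sum (C a * P) y (lt_of_le_of_lt (natDegree_C_mul_le a P) (lt_add_one _)) n,
    seqOp, Finset.mul_sum]
  exact Finset.sum_congr rfl fun k _ => by rw [coeff_C_mul, mul_assoc]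

lemma seqOp_XsubC_mul {R : Type*} [CommRing R] [Nontrivial R] (l : R) (P : R[X]) (y : ℤ → R) (n : ℤ) :
    seqOp ((X - C l) * P) y n = seqOp P y (n + 1) - l * seqOp P y n := by
  have hdeg : ((X - C l) * P).natDegree < P.natDegree + 2 := by
    calc ((X - C l) * P).natDegree ≤ (X - C l).natDegree + P.natDegree := natDegree_mul_le
    _ ≤ 1 + P.natDegree := by rw [natDegree_X_sub_C]
    _ < P.natDegree + 2 := by omega
  rw [seqOp_eq_sum _ y hdeg n]
  have hco : ∀ k : ℕ, ((X - C l) * P).coeff k * y (n + (k : ℤ))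
      = (X * P).coeff k * y (n + (k : ℤ)) - l * P.coeff k * y (n + (k : ℤ)) := by
    intro k
    rw [sub_mul, coeff_sub, coeff_C_mul, sub_mul, mul_assoc]
  rw [Finset.sum_congr rfl fun k _ => hco k, Finset.sum_sub_distrib]
  have h1 : ∑ k ∈ Finset.range (P.natDegree + 2), (X * P).coeff k * y (n + (k : ℤ))
      = seqOp P y (n + 1) := by
    rw [show P.natDegree + 2 = (P.natDegree + 1) + 1 from rfl, Finset.sum_range_succ']
    simp only [coeff_X_mul, mul_coeff_zero, coeff_X_zero, zero_mul, add_zero, Nat.cast_zero]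
    rw [seqOp]
    apply Finset.sum_congr rfl
    intro k _
    congr 1
    push_cast
    ring
  have h2 : ∑ k ∈ Finset.range (P.natDegree + 2), l * P.coeff k * y (n + (k : ℤ))
      = l * seqOp P y n := by
    rw [seqOp_eq_sum P y (by omega : P.natDegree < P.natDegree + 2) n, Finset.mul_sum]
    exact Finset.sum_congr rfl fun k _ => by ring
  rw [h1, h2]

/-- shifts of decaying sequences decay -/
lemma decay_shift {E : Type*} [TopologicalSpace E] [AddGroup E] {y : ℤ → E}
    (hy : Tendsto y cofinite (nhds 0)) (k : ℤ) :
    Tendsto (fun n => y (n + k)) cofinite (nhds 0) := by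
  exact hy.comp ((add_left_injective k).tendsto_cofinite)

lemma decay_seqOp {𝕜 : Type*} [NontriviallyNormedField 𝕜] (P : 𝕜[X]) {y : ℤ → 𝕜}
    (hy : Tendsto y cofinite (nhds 0)) :
    Tendsto (seqOp P y) cofinite (nhds 0) := by
  have : ∀ k ∈ Finset.range (P.natDegree + 1),
      Tendsto (fun n : ℤ => P.coeff k * y (n + (k : ℤ))) cofinite (nhds 0) := by
    intro k _
    simpa using (decay_shift hy (k : ℤ)).const_mul (P.coeff k)
  exact (by simpa using tendsto_finset_sum _ this : Tendsto (fun n : ℤ => ∑ k ∈ Finset.range (P.natDegree + 1), P.coeff k * y (n + (k : ℤ))) cofinite (nhds 0))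

lemma geom_zero_of_decay {l : ℂ} (hl : l ≠ 0) {z : ℤ → ℂ}
    (hz : Tendsto z cofinite (nhds 0)) (hrec : ∀ n : ℤ, z (n + 1) = l * z n) :
    ∀ n, z n = 0 := by
  have hgeo : ∀ n : ℤ, z n = z 0 * l ^ n := by
    intro n
    induction n using Int.induction_on with
    | zero => simp
    | succ n ih =>
        rw [hrec n, ih, zpow_add_one₀ hl]; ring
    | pred n ih =>
        have := hrec (-n - 1)
        rw [sub_add_cancel] at this
        have hz' : z (-n - 1) = l⁻¹ * z (-n) := by
          rw [this, ← mul_assoc, inv_mul_cancel₀ hl, one_mul]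
        rw [show (-(n:ℤ) - 1) = -n - 1 by ring, hz', ih, zpow_sub_one₀ hl]
        ring
  suffices h0 : z 0 = 0 by
    intro n; rw [hgeo n, h0, zero_mul]
  by_contra hne
  have habsnn := norm_nonneg (z 0)
  rcases le_total 1 ‖l‖ with habs | habs
  · -- look at n → +∞
    have hinj : Function.Injective (fun n : ℕ => (n : ℤ)) := fun a b h => by simpa using h
    have ht : Tendsto (fun n : ℕ => z (n : ℤ)) atTop (nhds 0) := by
      apply hz.comp
      rw [← Nat.cofinite_eq_atTop]
      exact hinj.tendsto_cofinite
    have hb : ∀ n : ℕ, ‖z 0‖ ≤ ‖z (n : ℤ)‖ := by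
      intro n
      rw [hgeo (n : ℤ), norm_mul, norm_zpow, zpow_natCast]
      exact le_mul_of_one_le_right habsnn (one_le_pow₀ habs)
    have habs0 : Tendsto (fun n : ℕ => ‖z (n : ℤ)‖) atTop (nhds 0) := by
      simpa [Function.comp_def] using (continuous_norm.tendsto 0).comp ht
    have h0le : ‖z 0‖ ≤ 0 := ge_of_tendsto habs0 (Eventually.of_forall hb)
    exact hne (by simpa using le_antisymm h0le habsnn)
  · -- look at n → -∞
    have hpos : 0 < ‖l‖ := norm_pos_iff.2 hl
    have hinj : Function.Injective (fun n : ℕ => -(n : ℤ)) := fun a b h => by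
      simp only [neg_inj, Nat.cast_inj] at h; exact h
    have ht : Tendsto (fun n : ℕ => z (-(n : ℤ))) atTop (nhds 0) := by
      apply hz.comp
      rw [← Nat.cofinite_eq_atTop]
      exact hinj.tendsto_cofinite
    have hb : ∀ n : ℕ, ‖z 0‖ ≤ ‖z (-(n : ℤ))‖ := by
      intro n
      rw [hgeo (-(n : ℤ)), norm_mul, norm_zpow, zpow_neg, zpow_natCast]
      have h1 : (1 : ℝ) ≤ (‖l‖ ^ n)⁻¹ := by
        rw [one_le_inv_iff₀]
        exact ⟨pow_pos hpos n, pow_le_one₀ (le_of_lt hpos) habs⟩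
      exact le_mul_of_one_le_right habsnn h1
    have habs0 : Tendsto (fun n : ℕ => ‖z (-(n : ℤ))‖) atTop (nhds 0) := by
      simpa [Function.comp_def] using (continuous_norm.tendsto 0).comp ht
    have h0le : ‖z 0‖ ≤ 0 := ge_of_tendsto habs0 (Eventually.of_forall hb)
    exact hne (by simpa using le_antisymm h0le habsnn)

lemma zero_of_decay_prod (s : Multiset ℂ) (h0 : (0 : ℂ) ∉ s) :
    ∀ y : ℤ → ℂ, Tendsto y cofinite (nhds 0) →
      (∀ n, seqOp ((s.map (fun l => X - C l)).prod) y n = 0) → ∀ n, y n = 0 := by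
  induction s using Multiset.induction with
  | empty =>
      intro y _ hsol n
      simpa [seqOp_one] using hsol n
  | cons l s ih =>
      intro y hy hsol n
      have hl : l ≠ 0 := fun h => h0 (h ▸ Multiset.mem_cons_self l s)
      have h0s : (0 : ℂ) ∉ s := fun h => h0 (Multiset.mem_cons_of_mem h)
      set P : ℂ[X] := ((s.map (fun l => X - C l)).prod) with hP
      have hsol' : ∀ m : ℤ, seqOp P y (m + 1) - l * seqOp P y m = 0 := by
        intro m
        have := hsol m
        rwa [Multiset.map_cons, Multiset.prod_cons, seqOp_XsubC_mul] at this
      have hz : Tendsto (seqOp P y) cofinite (nhds 0) := decay_seqOp P hy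
      have hzero : ∀ m, seqOp P y m = 0 := by
        apply geom_zero_of_decay hl hz
        intro m
        have := hsol' m
        linear_combination this
      exact ih h0s y hy hzero n

/-- A decaying two-sided sequence solving the recurrence of a polynomial with nonzero
constant coefficient is identically zero. -/
lemma zero_of_decay_sol (F : ℂ[X]) (h00 : F.coeff 0 ≠ 0) (y : ℤ → ℂ)
    (hy : Tendsto y cofinite (nhds 0)) (hsol : ∀ n, seqOp F y n = 0) : ∀ n, y n = 0 := by
  have hF : F ≠ 0 := fun h => h00 (by simp [h])
  have hsplit : C F.leadingCoeff * (F.roots.map (fun l => X - C l)).prod = F :=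
    Polynomial.C_leadingCoeff_mul_prod_multiset_X_sub_C
      ((Polynomial.splits_iff_card_roots).1 (IsAlgClosed.splits F))
  have hlc : F.leadingCoeff ≠ 0 := leadingCoeff_ne_zero.2 hF
  have h0r : (0 : ℂ) ∉ F.roots := by
    intro h
    rw [Polynomial.mem_roots hF] at h
    exact h00 (by simpa [Polynomial.IsRoot, Polynomial.eval_zero, Polynomial.coeff_zero_eq_eval_zero] using h)
  apply zero_of_decay_prod F.roots h0r y hy
  intro n
  have := hsol n
  rw [← hsplit, seqOp_C_mul] at this
  exact (mul_eq_zero.1 this).resolve_left hlc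

lemma isUnit_of_dvd_X_pow : ∀ (m : ℕ) (a : ℤ[X]), a.coeff 0 ≠ 0 → a ∣ X ^ m → IsUnit a := by
  intro m
  induction m with
  | zero => intro a _ hd; simpa using isUnit_of_dvd_one (by simpa using hd)
  | succ m ih =>
      intro a ha hd
      obtain ⟨c, hc⟩ := hd
      have hc0 : c.coeff 0 = 0 := by
        have h := congrArg (fun p => Polynomial.coeff p 0) hc
        simp only [mul_coeff_zero, coeff_X_pow] at h
        rcases (by simpa using h.symm : a.coeff 0 = 0 ∨ c.coeff 0 = 0) with h' | h'
        · exact absurd h' ha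
        · exact h'
      obtain ⟨c', hc'⟩ := Polynomial.X_dvd_iff.2 hc0
      have hX : (X : ℤ[X]) * X ^ m = X * (a * c') := by
        rw [hc'] at hc
        rw [pow_succ] at hc
        linear_combination hc
      have := mul_left_cancel₀ (Polynomial.X_ne_zero (R := ℤ)) hX
      exact ih a ha ⟨c', this⟩

lemma isUnit_of_toLaurent_isUnit (a : ℤ[X]) (ha : a.coeff 0 ≠ 0)
    (hu : IsUnit (Polynomial.toLaurent a)) : IsUnit a := by
  obtain ⟨v, hv⟩ := hu.exists_right_inv
  obtain ⟨n, b, hb⟩ := v.exists_T_pow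
  have : Polynomial.toLaurent (a * b) = Polynomial.toLaurent (X ^ n) := by
    rw [map_mul, hb, Polynomial.toLaurent_X_pow, ← mul_assoc, hv, one_mul]
  have hab : a * b = X ^ n := Polynomial.toLaurent_injective this
  exact isUnit_of_dvd_X_pow n a ha ⟨b, hab.symm⟩

lemma irreducible_int_of_laurent {f : ℤ[X]} (hm : 1 ≤ f.natDegree) (h0 : f.coeff 0 ≠ 0)
    (hirr : Irreducible (Polynomial.toLaurent f)) : Irreducible f := by
  constructor
  · intro hu
    exact hirr.not_isUnit (hu.map Polynomial.toLaurent)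
  · intro a b hab
    have h0a : a.coeff 0 ≠ 0 := fun h => h0 (by rw [hab, mul_coeff_zero, h, zero_mul])
    have h0b : b.coeff 0 ≠ 0 := fun h => h0 (by rw [hab, mul_coeff_zero, h, mul_zero])
    rcases hirr.isUnit_or_isUnit (by rw [hab, map_mul]) with hu | hu
    · exact Or.inl (isUnit_of_toLaurent_isUnit a h0a hu)
    · exact Or.inr (isUnit_of_toLaurent_isUnit b h0b hu)

lemma isPrimitive_of_laurent {f : ℤ[X]} (hm : 1 ≤ f.natDegree) (h0 : f.coeff 0 ≠ 0)
    (hirr : Irreducible (Polynomial.toLaurent f)) : f.IsPrimitive := by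
  intro r hr
  obtain ⟨h, hh⟩ := hr
  have hr0 : r ≠ 0 := by
    intro h'
    apply h0
    rw [hh, h', map_zero, zero_mul, coeff_zero]
  have h0h : h.coeff 0 ≠ 0 := by
    intro h'
    apply h0
    rw [hh, mul_coeff_zero, h', mul_zero]
  rcases hirr.isUnit_or_isUnit (by rw [hh, map_mul]) with hu | hu
  · have : IsUnit (Polynomial.C r) :=
      isUnit_of_toLaurent_isUnit _ (by simpa using hr0) hu
    exact Polynomial.isUnit_C.1 this
  · exfalso
    have : IsUnit h := isUnit_of_toLaurent_isUnit h h0h hu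
    have hdeg : h.natDegree = 0 := Polynomial.natDegree_eq_zero_of_isUnit this
    have : f.natDegree = 0 := by
      rw [hh]
      have h1 := Polynomial.natDegree_mul_le (p := Polynomial.C r) (q := h)
      simpa [hdeg] using h1
    omega

/-- If `θ` is a common complex root of `f` (irreducible, primitive) and `Cp`,
then `f ∣ Cp` over `ℤ`. -/
lemma int_dvd_of_common_root {f Cp : ℤ[X]} (hfirr : Irreducible f) (hfprim : f.IsPrimitive)
    (h0 : f.coeff 0 ≠ 0) {θ : ℂ} (hroot : Polynomial.aeval θ f = 0)
    (hCθ : Polynomial.aeval θ Cp = 0) : f ∣ Cp := by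
  by_cases hCp0 : Cp = 0
  · simp [hCp0]
  have hf0 : f ≠ 0 := fun h => h0 (by simp [h])
  set fQ : ℚ[X] := f.map (algebraMap ℤ ℚ) with hfQ
  have hfQirr : Irreducible fQ :=
    (hfprim.irreducible_iff_irreducible_map_fraction_map (K := ℚ)).1 hfirr
  have hfQ0 : fQ ≠ 0 := fun h =>
    hf0 (Polynomial.map_injective _ (algebraMap ℤ ℚ).injective_int (by rw [Polynomial.map_zero]; exact h))
  have haevalQ : Polynomial.aeval θ fQ = 0 := by
    rw [hfQ, Polynomial.aeval_map_algebraMap]; exact hroot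
  have hint : IsIntegral ℚ θ := (IsAlgebraic.isIntegral ⟨fQ, hfQ0, haevalQ⟩)
  have hmin_dvd_f : minpoly ℚ θ ∣ fQ := minpoly.dvd ℚ θ haevalQ
  have hminirr : Irreducible (minpoly ℚ θ) := minpoly.irreducible hint
  have hfQ_dvd_min : fQ ∣ minpoly ℚ θ := hminirr.dvd_symm hfQirr hmin_dvd_f
  have hmin_dvd_C : minpoly ℚ θ ∣ Cp.map (algebraMap ℤ ℚ) := by
    apply minpoly.dvd ℚ θ
    rw [Polynomial.aeval_map_algebraMap]; exact hCθ
  have hfQ_dvd_C : fQ ∣ Cp.map (algebraMap ℤ ℚ) := hfQ_dvd_min.trans hmin_dvd_C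
  -- reduce to the primitive part of Cp
  have hCprim : Cp.primPart.IsPrimitive := Polynomial.isPrimitive_primPart Cp
  have hcontent : Cp = Polynomial.C Cp.content * Cp.primPart := (Cp.eq_C_content_mul_primPart)
  have hcont0 : (Cp.content : ℚ) ≠ 0 := by
    simpa using fun h => hCp0 (Polynomial.content_eq_zero_iff.1 h)
  have hfQ_dvd_pp : fQ ∣ Cp.primPart.map (algebraMap ℤ ℚ) := by
    have hmap : Cp.map (algebraMap ℤ ℚ)
        = Polynomial.C ((Cp.content : ℤ) : ℚ) * Cp.primPart.map (algebraMap ℤ ℚ) := by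
      conv_lhs => rw [hcontent]
      rw [Polynomial.map_mul, Polynomial.map_C]
      rfl
    have hu : IsUnit (Polynomial.C ((Cp.content : ℤ) : ℚ)) :=
      Polynomial.isUnit_C.2 (isUnit_iff_ne_zero.2 hcont0)
    rcases hfQ_dvd_C with ⟨t, ht⟩
    rw [hmap] at ht
    obtain ⟨u, hu'⟩ := hu
    refine ⟨((u⁻¹ : ℚ[X]ˣ) : ℚ[X]) * t, ?_⟩
    calc Cp.primPart.map (algebraMap ℤ ℚ)
        = ((u⁻¹ : ℚ[X]ˣ) : ℚ[X]) * ((u : ℚ[X]) * Cp.primPart.map (algebraMap ℤ ℚ)) := by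
          rw [← mul_assoc, Units.inv_mul, one_mul]
      _ = ((u⁻¹ : ℚ[X]ˣ) : ℚ[X]) * (fQ * t) := by rw [hu', ht]
      _ = fQ * (((u⁻¹ : ℚ[X]ˣ) : ℚ[X]) * t) := by ring
  have := hfprim.dvd_of_fraction_map_dvd_fraction_map (K := ℚ) hfQ_dvd_pp
  exact this.trans (Dvd.intro_left _ hcontent.symm)

/-- Convolution formula relating coefficients of `f*g` to a range sum. -/
lemma conv_coeff (f g : ℤ[X]) (t : ℤ) :
    ∑ k ∈ Finset.range (f.natDegree + 1),
        f.coeff k * (if 0 ≤ t - k then g.coeff (t - k).toNat else 0)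
      = (if 0 ≤ t then (f * g).coeff t.toNat else 0) := by
  rcases le_or_gt 0 t with ht | ht
  · lift t to ℕ using ht
    rw [if_pos (by positivity), Int.toNat_natCast]
    have hmulc : (f * g).coeff t = ∑ k ∈ Finset.range (t + 1), f.coeff k * g.coeff (t - k) := by
      rw [Polynomial.coeff_mul, Finset.Nat.sum_antidiagonal_eq_sum_range_succ_mk]
    rw [hmulc]
    set m := max (f.natDegree + 1) (t + 1) with hm
    have hL : ∑ k ∈ Finset.range (f.natDegree + 1),
        f.coeff k * (if 0 ≤ (t : ℤ) - k then g.coeff ((t : ℤ) - k).toNat else 0)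
        = ∑ k ∈ Finset.range m,
        f.coeff k * (if 0 ≤ (t : ℤ) - k then g.coeff ((t : ℤ) - k).toNat else 0) := by
      apply Finset.sum_subset (Finset.range_subset_range.2 (le_max_left _ _))
      intro k _ hk
      simp only [Finset.mem_range] at hk
      rw [Polynomial.coeff_eq_zero_of_natDegree_lt (by omega), zero_mul]
    have step1 : ∑ k ∈ Finset.range (t + 1), f.coeff k * g.coeff (t - k)
        = ∑ k ∈ Finset.range (t + 1),
          f.coeff k * (if 0 ≤ (t : ℤ) - k then g.coeff ((t : ℤ) - k).toNat else 0) := by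
      apply Finset.sum_congr rfl
      intro k hk
      simp only [Finset.mem_range] at hk
      rw [if_pos (by omega)]
      congr 2
      omega
    have hR : ∑ k ∈ Finset.range (t + 1),
          f.coeff k * (if 0 ≤ (t : ℤ) - k then g.coeff ((t : ℤ) - k).toNat else 0)
        = ∑ k ∈ Finset.range m,
          f.coeff k * (if 0 ≤ (t : ℤ) - k then g.coeff ((t : ℤ) - k).toNat else 0) := by
      apply Finset.sum_subset (Finset.range_subset_range.2 (le_max_right _ _))
      intro k _ hk
      simp only [Finset.mem_range] at hk
      rw [if_neg (by omega), mul_zero]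
    rw [hL, step1, hR]
    done
  · rw [if_neg (by omega)]
    apply Finset.sum_eq_zero
    intro k _
    rw [if_neg (by omega), mul_zero]

lemma sum_Ioc_consec (g : ℤ → ℂ) {a b c : ℤ} (hab : a ≤ b) (hbc : b ≤ c) :
    ∑ m ∈ Finset.Ioc a b, g m + ∑ m ∈ Finset.Ioc b c, g m = ∑ m ∈ Finset.Ioc a c, g m := by
  rw [← Finset.sum_union ?disj, Finset.Ioc_union_Ioc_eq_Ioc hab hbc]
  case disj =>
    rw [Finset.disjoint_left]
    intro x hx hx'
    simp only [Finset.mem_Ioc] at hx hx'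
    omega

lemma sum_Ioc_shift (g : ℤ → ℂ) (a b k : ℤ) :
    ∑ n ∈ Finset.Ioc a b, g (n + k) = ∑ m ∈ Finset.Ioc (a + k) (b + k), g m := by
  rw [← Finset.map_add_right_Ioc, Finset.sum_map]
  rfl

lemma sum_Ioc_eq_range (g : ℤ → ℂ) (a : ℤ) (k : ℕ) :
    ∑ m ∈ Finset.Ioc a (a + (k : ℤ)), g m = ∑ j ∈ Finset.range k, g (a + 1 + j) := by
  induction k with
  | zero => simp
  | succ k ih =>
      have hsingle : Finset.Ioc (a + (k : ℤ)) (a + ((k : ℕ) + 1 : ℤ)) = {a + (k : ℤ) + 1} := by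
        ext x
        simp only [Finset.mem_Ioc, Finset.mem_singleton]
        omega
      have hsplit := sum_Ioc_consec g (by omega : a ≤ a + (k : ℤ))
        (by push_cast; omega : a + (k : ℤ) ≤ a + ((k : ℕ) + 1 : ℤ))
      rw [Finset.sum_range_succ, ← ih]
      push_cast
      push_cast at hsplit
      rw [← hsplit, hsingle, Finset.sum_singleton]
      ring_nf

lemma shifted_sum (u : ℤ → ℂ) (a b : ℤ) (k : ℕ) (hab : a ≤ b) :
    ∑ n ∈ Finset.Ioc a b, u (n + (k : ℤ))
      = (∑ m ∈ Finset.Ioc a b, u m) + (∑ m ∈ Finset.Ioc b (b + (k : ℤ)), u m)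
        - ∑ m ∈ Finset.Ioc a (a + (k : ℤ)), u m := by
  rw [sum_Ioc_shift u a b (k : ℤ)]
  have h1 := sum_Ioc_consec u hab (by omega : b ≤ b + (k : ℤ))
  have h2 := sum_Ioc_consec u (by omega : a ≤ a + (k : ℤ))
    (by omega : a + (k : ℤ) ≤ b + (k : ℤ))
  linear_combination h2 - h1

/-- Key analytic lemma: the transform of the integer sequence `cZ` vanishes at the
unit-circle root `θ`. -/
lemma transform_vanishes (θ : ℂ) (hθ : ‖θ‖ = 1) (xt : ℤ → ℝ)
    (hxt : Tendsto xt cofinite (nhds 0)) (d : ℕ) (co : ℕ → ℤ)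
    (hfθ : ∑ k ∈ Finset.range (d + 1), (co k : ℂ) * θ ^ k = 0)
    (cZ : ℤ → ℤ)
    (hc : ∀ n : ℤ, (cZ n : ℝ) = ∑ k ∈ Finset.range (d + 1), (co k : ℝ) * xt (n + (k : ℤ)))
    (N : ℕ) (hN : ∀ n : ℤ, N < n.natAbs → cZ n = 0) :
    ∑ n ∈ Finset.Ioc (-(N : ℤ) - 1) (N : ℤ), (cZ n : ℂ) * θ ^ (-n) = 0 := by
  have hθ0 : θ ≠ 0 := fun h => by simp [h] at hθ
  -- the transformed sequence
  have hterm : ∀ n : ℤ, (cZ n : ℂ) * θ ^ (-n)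
      = ∑ k ∈ Finset.range (d + 1),
          (co k : ℂ) * θ ^ k * ((xt (n + (k : ℤ)) : ℂ) * θ ^ (-(n + (k : ℤ)))) := by
    intro n
    have hcast : (cZ n : ℂ) = ∑ k ∈ Finset.range (d + 1), (co k : ℂ) * (xt (n + (k : ℤ)) : ℂ) := by
      have h2 := congrArg (fun r : ℝ => (r : ℂ)) (hc n)
      push_cast at h2 ⊢
      exact h2
    rw [hcast, Finset.sum_mul]
    apply Finset.sum_congr rfl
    intro k _
    have hzp : θ ^ (k : ℕ) * θ ^ (-(n + (k : ℤ))) = θ ^ (-n) := by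
      rw [← zpow_natCast θ k, ← zpow_add₀ hθ0]
      congr 1
      ring
    calc (co k : ℂ) * (xt (n + (k : ℤ)) : ℂ) * θ ^ (-n)
        = (co k : ℂ) * (xt (n + (k : ℤ)) : ℂ) * (θ ^ (k : ℕ) * θ ^ (-(n + (k : ℤ)))) := by
          rw [hzp]
      _ = (co k : ℂ) * θ ^ (k : ℕ) * ((xt (n + (k : ℤ)) : ℂ) * θ ^ (-(n + (k : ℤ)))) := by ring
  -- the structural identity
  have hident : ∀ M : ℕ, ∑ n ∈ Finset.Ioc (-(M : ℤ) - 1) (M : ℤ), (cZ n : ℂ) * θ ^ (-n)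
      = ∑ k ∈ Finset.range (d + 1), (co k : ℂ) * θ ^ k *
          ((∑ m ∈ Finset.Ioc (M : ℤ) ((M : ℤ) + (k : ℤ)), (xt m : ℂ) * θ ^ (-m))
            - ∑ m ∈ Finset.Ioc (-(M : ℤ) - 1) (-(M : ℤ) - 1 + (k : ℤ)), (xt m : ℂ) * θ ^ (-m)) := by
    intro M
    have hab : (-(M : ℤ) - 1) ≤ (M : ℤ) := by omega
    calc ∑ n ∈ Finset.Ioc (-(M : ℤ) - 1) (M : ℤ), (cZ n : ℂ) * θ ^ (-n)
        = ∑ n ∈ Finset.Ioc (-(M : ℤ) - 1) (M : ℤ), ∑ k ∈ Finset.range (d + 1),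
            (co k : ℂ) * θ ^ k * ((xt (n + (k : ℤ)) : ℂ) * θ ^ (-(n + (k : ℤ)))) :=
          Finset.sum_congr rfl fun n _ => hterm n
      _ = ∑ k ∈ Finset.range (d + 1), (co k : ℂ) * θ ^ k *
            ∑ n ∈ Finset.Ioc (-(M : ℤ) - 1) (M : ℤ), ((xt (n + (k : ℤ)) : ℂ) * θ ^ (-(n + (k : ℤ)))) := by
          rw [Finset.sum_comm]
          exact Finset.sum_congr rfl fun k _ => by rw [Finset.mul_sum]
      _ = ∑ k ∈ Finset.range (d + 1), (co k : ℂ) * θ ^ k *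
            ((∑ m ∈ Finset.Ioc (-(M : ℤ) - 1) (M : ℤ), (xt m : ℂ) * θ ^ (-m))
              + (∑ m ∈ Finset.Ioc (M : ℤ) ((M : ℤ) + (k : ℤ)), (xt m : ℂ) * θ ^ (-m))
              - ∑ m ∈ Finset.Ioc (-(M : ℤ) - 1) (-(M : ℤ) - 1 + (k : ℤ)), (xt m : ℂ) * θ ^ (-m)) := by
          apply Finset.sum_congr rfl
          intro k _
          rw [shifted_sum (fun m => (xt m : ℂ) * θ ^ (-m)) _ _ k hab]
      _ = (∑ k ∈ Finset.range (d + 1), (co k : ℂ) * θ ^ k) *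
            (∑ m ∈ Finset.Ioc (-(M : ℤ) - 1) (M : ℤ), (xt m : ℂ) * θ ^ (-m))
          + ∑ k ∈ Finset.range (d + 1), (co k : ℂ) * θ ^ k *
            ((∑ m ∈ Finset.Ioc (M : ℤ) ((M : ℤ) + (k : ℤ)), (xt m : ℂ) * θ ^ (-m))
              - ∑ m ∈ Finset.Ioc (-(M : ℤ) - 1) (-(M : ℤ) - 1 + (k : ℤ)), (xt m : ℂ) * θ ^ (-m)) := by
          rw [Finset.sum_mul, ← Finset.sum_add_distrib]
          apply Finset.sum_congr rfl
          intro k _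
          ring
      _ = ∑ k ∈ Finset.range (d + 1), (co k : ℂ) * θ ^ k *
            ((∑ m ∈ Finset.Ioc (M : ℤ) ((M : ℤ) + (k : ℤ)), (xt m : ℂ) * θ ^ (-m))
              - ∑ m ∈ Finset.Ioc (-(M : ℤ) - 1) (-(M : ℤ) - 1 + (k : ℤ)), (xt m : ℂ) * θ ^ (-m)) := by
          rw [hfθ, zero_mul, zero_add]
  -- decay of the transformed sequence
  have hu0 : Tendsto (fun m : ℤ => (xt m : ℂ) * θ ^ (-m)) cofinite (nhds 0) := by
    rw [tendsto_zero_iff_norm_tendsto_zero]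
    have hnorm : ∀ m : ℤ, ‖(xt m : ℂ) * θ ^ (-m)‖ = |xt m| := by
      intro m
      rw [norm_mul, norm_zpow, Complex.norm_real, Real.norm_eq_abs, hθ,
        one_zpow, mul_one]
    simp only [hnorm]
    have habs : Tendsto (fun r : ℝ => |r|) (nhds 0) (nhds 0) := by
      simpa using (continuous_abs.tendsto (0 : ℝ))
    exact habs.comp hxt
  -- limit of the boundary terms
  have hlim : Tendsto (fun M : ℕ => ∑ k ∈ Finset.range (d + 1), (co k : ℂ) * θ ^ k *
      ((∑ m ∈ Finset.Ioc (M : ℤ) ((M : ℤ) + (k : ℤ)), (xt m : ℂ) * θ ^ (-m))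
        - ∑ m ∈ Finset.Ioc (-(M : ℤ) - 1) (-(M : ℤ) - 1 + (k : ℤ)), (xt m : ℂ) * θ ^ (-m)))
      atTop (nhds 0) := by
    have hterms : ∀ k ∈ Finset.range (d + 1), Tendsto (fun M : ℕ => (co k : ℂ) * θ ^ k *
        ((∑ m ∈ Finset.Ioc (M : ℤ) ((M : ℤ) + (k : ℤ)), (xt m : ℂ) * θ ^ (-m))
          - ∑ m ∈ Finset.Ioc (-(M : ℤ) - 1) (-(M : ℤ) - 1 + (k : ℤ)), (xt m : ℂ) * θ ^ (-m)))
        atTop (nhds 0) := by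
      intro k _
      have hp : Tendsto (fun M : ℕ =>
          ∑ m ∈ Finset.Ioc (M : ℤ) ((M : ℤ) + (k : ℤ)), (xt m : ℂ) * θ ^ (-m)) atTop (nhds 0) := by
        have hrepr : ∀ M : ℕ, (∑ m ∈ Finset.Ioc (M : ℤ) ((M : ℤ) + (k : ℤ)), (xt m : ℂ) * θ ^ (-m))
            = ∑ j ∈ Finset.range k, (xt ((M : ℤ) + 1 + (j : ℤ)) : ℂ) * θ ^ (-((M : ℤ) + 1 + (j : ℤ))) :=
          fun M => sum_Ioc_eq_range (fun m => (xt m : ℂ) * θ ^ (-m)) (M : ℤ) k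
        simp only [hrepr]
        have hjs : ∀ j ∈ Finset.range k, Tendsto
            (fun M : ℕ => (xt ((M : ℤ) + 1 + (j : ℤ)) : ℂ) * θ ^ (-((M : ℤ) + 1 + (j : ℤ))))
            atTop (nhds 0) := by
          intro j _
          have hinj : Function.Injective (fun M : ℕ => (M : ℤ) + 1 + (j : ℤ)) := by
            intro x y h
            simp only at h
            omega
          apply hu0.comp
          rw [← Nat.cofinite_eq_atTop]
          exact hinj.tendsto_cofinite
        simpa using tendsto_finset_sum _ hjs
      have hm : Tendsto (fun M : ℕ =>
          ∑ m ∈ Finset.Ioc (-(M : ℤ) - 1) (-(M : ℤ) - 1 + (k : ℤ)), (xt m : ℂ) * θ ^ (-m))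
          atTop (nhds 0) := by
        have hrepr : ∀ M : ℕ,
            (∑ m ∈ Finset.Ioc (-(M : ℤ) - 1) (-(M : ℤ) - 1 + (k : ℤ)), (xt m : ℂ) * θ ^ (-m))
            = ∑ j ∈ Finset.range k,
                (xt (-(M : ℤ) - 1 + 1 + (j : ℤ)) : ℂ) * θ ^ (-(-(M : ℤ) - 1 + 1 + (j : ℤ))) :=
          fun M => sum_Ioc_eq_range (fun m => (xt m : ℂ) * θ ^ (-m)) (-(M : ℤ) - 1) k
        simp only [hrepr]
        have hjs : ∀ j ∈ Finset.range k, Tendsto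
            (fun M : ℕ => (xt (-(M : ℤ) - 1 + 1 + (j : ℤ)) : ℂ) * θ ^ (-(-(M : ℤ) - 1 + 1 + (j : ℤ))))
            atTop (nhds 0) := by
          intro j _
          have hinj : Function.Injective (fun M : ℕ => -(M : ℤ) - 1 + 1 + (j : ℤ)) := by
            intro x y h
            simp only at h
            omega
          apply hu0.comp
          rw [← Nat.cofinite_eq_atTop]
          exact hinj.tendsto_cofinite
        simpa using tendsto_finset_sum _ hjs
      have := (hp.sub hm).const_mul ((co k : ℂ) * θ ^ k)
      simpa using this
    simpa using tendsto_finset_sum _ hterms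
  -- the partial sums are eventually constant
  have hconst : ∀ M : ℕ, N ≤ M →
      (∑ n ∈ Finset.Ioc (-(M : ℤ) - 1) (M : ℤ), (cZ n : ℂ) * θ ^ (-n))
        = ∑ n ∈ Finset.Ioc (-(N : ℤ) - 1) (N : ℤ), (cZ n : ℂ) * θ ^ (-n) := by
    intro M hM
    symm
    apply Finset.sum_subset (Finset.Ioc_subset_Ioc (by omega) (by exact_mod_cast hM))
    intro n hn hn'
    simp only [Finset.mem_Ioc] at hn hn'
    have hgt : N < n.natAbs := by omega
    rw [hN n hgt]
    simp
  -- conclude by uniqueness of limits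
  have hVtend : Tendsto (fun M : ℕ =>
      ∑ n ∈ Finset.Ioc (-(M : ℤ) - 1) (M : ℤ), (cZ n : ℂ) * θ ^ (-n)) atTop (nhds 0) := by
    apply Tendsto.congr (fun M => (hident M).symm) hlim
  have hVconst : Tendsto (fun M : ℕ =>
      ∑ n ∈ Finset.Ioc (-(M : ℤ) - 1) (M : ℤ), (cZ n : ℂ) * θ ^ (-n)) atTop
      (nhds (∑ n ∈ Finset.Ioc (-(N : ℤ) - 1) (N : ℤ), (cZ n : ℂ) * θ ^ (-n))) := by
    apply Tendsto.congr' _ tendsto_const_nhds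
    filter_upwards [eventually_ge_atTop N] with M hM
    exact (hconst M hM).symm
  exact tendsto_nhds_unique hVconst hVtend

lemma seqOp_map_cast {K : Type*} [Field K] [CharZero K] (f : ℤ[X]) (y : ℤ → K) (n : ℤ) :
    seqOp (f.map (Int.castRingHom K)) y n
      = ∑ k ∈ Finset.range (f.natDegree + 1), (f.coeff k : K) * y (n + (k : ℤ)) := by
  have hdeg : (f.map (Int.castRingHom K)).natDegree = f.natDegree :=
    natDegree_map_eq_of_injective Int.cast_injective f
  rw [seqOp, hdeg]
  exact Finset.sum_congr rfl fun k _ => by rw [Polynomial.coeff_map]; norm_num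


end AuxiliaryLemmas

/-- if `f` is irreducible in `ℤ[u^{±1}]`, noncyclotomic and nonhyperbolic
(some complex root of `f` has absolute value 1), then `α_f` has no nonzero homoclinic
points. -/
theorem no_homoclinic_points_nonhyperbolic (f : Polynomial ℤ) (hm : 1 ≤ f.natDegree)
    (hlead : 0 < f.leadingCoeff) (h0 : f.coeff 0 ≠ 0)
    (hirr : Irreducible (Polynomial.toLaurent f)) (hnc : Noncyclotomic f)
    (hnonhyp : ∃ θ : ℂ, Polynomial.aeval θ f = 0 ∧ ‖θ‖ = 1) :
    ∀ x ∈ Xf f, HomoclinicT x → x = 0 := by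
  intro x hx hhom
  haveI : Fact ((0 : ℝ) < 1) := ⟨zero_lt_one⟩
  set d := f.natDegree with hd
  -- Step 1: coordinatewise decay
  have hcoord : Tendsto (fun k : ℤ => x k) cofinite (nhds 0) := by
    rw [HomoclinicT, tendsto_pi_nhds] at hhom
    have h1 := hhom 0
    simp only [shiftIterT, Pi.zero_apply] at h1
    simpa using h1
  -- Step 2: the fundamental-domain lift
  set xt : ℤ → ℝ := fun n => ((AddCircle.equivIco 1 (-(1/2)) (x n)) : ℝ) with hxt
  have hlift : ∀ n : ℤ, ((xt n : ℝ) : Torus) = x n := by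
    intro n
    exact (AddCircle.equivIco 1 (-(1/2))).symm_apply_apply (x n)
  have hne : (0 : AddCircle (1 : ℝ)) ≠ (((-(1/2) : ℝ)) : AddCircle (1 : ℝ)) := by
    intro h
    rw [eq_comm, AddCircle.coe_eq_zero_iff] at h
    obtain ⟨m, hmeq⟩ := h
    rw [zsmul_eq_mul, mul_one] at hmeq
    have h2 : ((2 * m : ℤ) : ℝ) = -1 := by push_cast; linarith
    have h3 : (2 * m : ℤ) = -1 := by exact_mod_cast h2
    omega
  have hxt0 : Tendsto xt cofinite (nhds 0) := by
    have hcont : ContinuousAt (AddCircle.equivIco (1 : ℝ) (-(1/2))) 0 :=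
      AddCircle.continuousAt_equivIco (1 : ℝ) (-(1/2)) hne
    have h1 := hcont.tendsto.comp hcoord
    have h2 := (continuous_subtype_val.tendsto _).comp h1
    have heval : ((AddCircle.equivIco (1 : ℝ) (-(1/2)) 0 : ℝ)) = 0 := by
      have hmem := (AddCircle.equivIco (1 : ℝ) (-(1/2)) 0).2
      have hcoe : (((AddCircle.equivIco (1 : ℝ) (-(1/2)) 0 : ℝ)) : AddCircle (1 : ℝ)) = 0 :=
        (AddCircle.equivIco (1 : ℝ) (-(1/2))).symm_apply_apply 0
      rw [AddCircle.coe_eq_zero_iff] at hcoe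
      obtain ⟨m, hmz⟩ := hcoe
      rw [zsmul_eq_mul, mul_one] at hmz
      simp only [Set.mem_Ico] at hmem
      have hm1 : ((2 * m : ℤ) : ℝ) < 1 := by push_cast; linarith [hmem.2]
      have hm2 : (-1 : ℝ) ≤ ((2 * m : ℤ) : ℝ) := by push_cast; linarith [hmem.1]
      have hm1' : (2 * m : ℤ) < 1 := by exact_mod_cast hm1
      have hm2' : (-1 : ℤ) ≤ 2 * m := by exact_mod_cast hm2
      have hm0 : m = 0 := by omega
      rw [← hmz, hm0]
      norm_num
    rw [heval] at h2
    exact h2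
  -- Step 3: the integer sequence c
  set fR : Polynomial ℝ := f.map (Int.castRingHom ℝ) with hfR
  set creal : ℤ → ℝ := seqOp fR xt with hcreal
  have hcreal_eval : ∀ n : ℤ, creal n
      = ∑ k ∈ Finset.range (d + 1), (f.coeff k : ℝ) * xt (n + (k : ℤ)) :=
    fun n => seqOp_map_cast f xt n
  have hcreal_decay : Tendsto creal cofinite (nhds 0) := decay_seqOp fR hxt0
  have hint : ∀ n : ℤ, ∃ m : ℤ, (m : ℝ) = creal n := by
    intro n
    have hker := hx n
    have hfsT : fsT f x n = ((creal n : ℝ) : Torus) := by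
      set φ : ℝ →+ Torus := QuotientAddGroup.mk' (AddSubgroup.zmultiples (1 : ℝ)) with hφdef
      have hφ : ∀ r : ℝ, φ r = (r : Torus) := fun r => rfl
      calc fsT f x n = ∑ k ∈ Finset.range (d + 1), f.coeff k • φ (xt (n + (k : ℤ))) := by
            rw [fsT]
            exact Finset.sum_congr rfl fun k _ => by rw [hφ, hlift]
        _ = ∑ k ∈ Finset.range (d + 1), φ (f.coeff k • xt (n + (k : ℤ))) := by
            exact Finset.sum_congr rfl fun k _ => (map_zsmul φ _ _).symm
        _ = φ (∑ k ∈ Finset.range (d + 1), f.coeff k • xt (n + (k : ℤ))) := (map_sum φ _ _).symm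
        _ = ((creal n : ℝ) : Torus) := by
            rw [hφ, hcreal_eval n]
            congr 1
            exact Finset.sum_congr rfl fun k _ => by rw [zsmul_eq_mul]
    rw [hfsT, AddCircle.coe_eq_zero_iff] at hker
    obtain ⟨m, hm'⟩ := hker
    exact ⟨m, by rwa [zsmul_eq_mul, mul_one] at hm'⟩
  set cZ : ℤ → ℤ := fun n => (hint n).choose with hcZdef
  have hcZ : ∀ n : ℤ, ((cZ n : ℤ) : ℝ) = creal n := fun n => (hint n).choose_spec
  -- c is eventually zero
  have hev : ∀ᶠ n in cofinite, |creal n| < 1 := by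
    have := Metric.tendsto_nhds.mp hcreal_decay 1 one_pos
    filter_upwards [this] with n hn
    rwa [Real.dist_eq, sub_zero] at hn
  have hfin : {n : ℤ | cZ n ≠ 0}.Finite := by
    apply (Filter.eventually_cofinite.mp hev).subset
    intro n hn
    simp only [Set.mem_setOf_eq] at hn ⊢
    intro hlt
    rw [← hcZ n] at hlt
    rw [← Int.cast_abs] at hlt
    have hlt2 : |cZ n| < 1 := by exact_mod_cast hlt
    exact hn (Int.abs_lt_one_iff.mp hlt2)
  obtain ⟨N, hNb⟩ : ∃ N : ℕ, ∀ m ∈ Int.natAbs '' {n : ℤ | cZ n ≠ 0}, m ≤ N := by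
    obtain ⟨N, hN⟩ := (hfin.image Int.natAbs).bddAbove
    exact ⟨N, fun m hmem => hN hmem⟩
  have hN : ∀ n : ℤ, N < n.natAbs → cZ n = 0 := by
    intro n hn
    by_contra hne'
    exact absurd (hNb n.natAbs ⟨n, hne', rfl⟩) (by omega)
  -- Step 4: the transform vanishes at θ
  obtain ⟨θ, hroot, habsθ⟩ := hnonhyp
  have hθ0 : θ ≠ 0 := fun h => by simp [h] at habsθ
  have hfθ : ∑ k ∈ Finset.range (d + 1), (f.coeff k : ℂ) * θ ^ k = 0 := by
    have := hroot
    rw [Polynomial.aeval_eq_sum_range] at this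
    rw [← this]
    exact Finset.sum_congr rfl fun k _ => by rw [zsmul_eq_mul]
  have hsum0 : ∑ n ∈ Finset.Ioc (-(N : ℤ) - 1) (N : ℤ), (cZ n : ℂ) * θ ^ (-n) = 0 := by
    apply transform_vanishes θ habsθ xt hxt0 d (fun k => f.coeff k) hfθ cZ _ N hN
    intro n
    rw [hcZ n, hcreal_eval n]
  -- Step 5: the polynomial C and its root
  set Cp : Polynomial ℤ :=
    ∑ j ∈ Finset.range (2 * N + 1), Polynomial.monomial j (cZ ((N : ℤ) - j)) with hCp
  have hCpcoeff : ∀ j : ℕ, Cp.coeff j = cZ ((N : ℤ) - j) := by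
    intro j
    rw [hCp, Polynomial.finset_sum_coeff]
    simp only [Polynomial.coeff_monomial]
    rw [Finset.sum_ite_eq' (Finset.range (2 * N + 1)) j (fun i => cZ ((N : ℤ) - i))]
    by_cases hj : j ∈ Finset.range (2 * N + 1)
    · rw [if_pos hj]
    · rw [if_neg hj]
      simp only [Finset.mem_range] at hj
      exact (hN ((N : ℤ) - j) (by omega)).symm
  have hCθ : Polynomial.aeval θ Cp = 0 := by
    have hexp : Polynomial.aeval θ Cp
        = ∑ j ∈ Finset.range (2 * N + 1), (cZ ((N : ℤ) - j) : ℂ) * θ ^ j := by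
      rw [hCp, map_sum]
      apply Finset.sum_congr rfl
      intro j _
      rw [Polynomial.aeval_monomial]
      norm_num
    have hbij : ∑ j ∈ Finset.range (2 * N + 1), (cZ ((N : ℤ) - j) : ℂ) * θ ^ j
        = θ ^ (N : ℕ) * ∑ n ∈ Finset.Ioc (-(N : ℤ) - 1) (N : ℤ), (cZ n : ℂ) * θ ^ (-n) := by
      rw [Finset.mul_sum]
      refine Finset.sum_nbij' (fun j : ℕ => (N : ℤ) - j) (fun n : ℤ => ((N : ℤ) - n).toNat) ?_ ?_ ?_ ?_ ?_
      · intro j hjmem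
        simp only [Finset.mem_range] at hjmem
        simp only [Finset.mem_Ioc]
        omega
      · intro n hnmem
        simp only [Finset.mem_Ioc] at hnmem
        simp only [Finset.mem_range]
        omega
      · intro j hjmem
        simp only [Finset.mem_range] at hjmem
        omega
      · intro n hnmem
        simp only [Finset.mem_Ioc] at hnmem
        omega
      · intro j hjmem
        simp only [Finset.mem_range] at hjmem
        have hθpow : θ ^ (N : ℕ) * θ ^ (-((N : ℤ) - j)) = θ ^ (j : ℕ) := by
          rw [← zpow_natCast θ N, ← zpow_natCast θ j, ← zpow_add₀ hθ0]
          congr 1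
          omega
        rw [← hθpow]
        ring
    rw [hexp, hbij, hsum0, mul_zero]
  -- Step 6: divisibility over ℤ
  have hfirr : Irreducible f := irreducible_int_of_laurent hm h0 hirr
  have hfprim : f.IsPrimitive := isPrimitive_of_laurent hm h0 hirr
  obtain ⟨g, hg⟩ : f ∣ Cp := int_dvd_of_common_root hfirr hfprim h0 hroot hCθ
  -- Step 7: the correction sequence
  set gext : ℤ → ℤ := fun t => if 0 ≤ t then g.coeff t.toNat else 0 with hgext
  set gtil : ℤ → ℝ := fun m => ((gext ((N : ℤ) - m) : ℤ) : ℝ) with hgtil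
  set y : ℤ → ℝ := fun m => xt m - gtil m with hy
  have hsolR : ∀ n : ℤ, seqOp fR y n = 0 := by
    intro n
    have hexp : seqOp fR y n = creal n - seqOp fR gtil n := by
      rw [hcreal]
      rw [show seqOp fR y n = ∑ k ∈ Finset.range (d + 1), (f.coeff k : ℝ) * y (n + (k : ℤ))
        from seqOp_map_cast f y n]
      rw [show seqOp fR gtil n = ∑ k ∈ Finset.range (d + 1), (f.coeff k : ℝ) * gtil (n + (k : ℤ))
        from seqOp_map_cast f gtil n]
      rw [show seqOp fR xt n = ∑ k ∈ Finset.range (d + 1), (f.coeff k : ℝ) * xt (n + (k : ℤ))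
        from seqOp_map_cast f xt n]
      rw [← Finset.sum_sub_distrib]
      apply Finset.sum_congr rfl
      intro k _
      rw [hy]
      ring
    have hgconv : seqOp fR gtil n = (cZ n : ℝ) := by
      rw [show seqOp fR gtil n = ∑ k ∈ Finset.range (d + 1), (f.coeff k : ℝ) * gtil (n + (k : ℤ))
        from seqOp_map_cast f gtil n]
      have hstep : ∑ k ∈ Finset.range (d + 1), (f.coeff k : ℝ) * gtil (n + (k : ℤ))
          = ((∑ k ∈ Finset.range (d + 1),
              f.coeff k * (if 0 ≤ ((N : ℤ) - n) - k then g.coeff (((N : ℤ) - n) - k).toNat else 0) : ℤ) : ℝ) := by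
        have hterm : ∀ k ∈ Finset.range (d + 1), (f.coeff k : ℝ) * gtil (n + (k : ℤ))
            = ((f.coeff k * (if 0 ≤ ((N : ℤ) - n) - k then g.coeff (((N : ℤ) - n) - k).toNat else 0)
                : ℤ) : ℝ) := by
          intro k _
          simp only [hgtil, hgext]
          have harg : (N : ℤ) - (n + (k : ℤ)) = ((N : ℤ) - n) - (k : ℤ) := by ring
          rw [harg]
          split_ifs with hcnd
          · push_cast
            ring
          · push_cast
            ring
        rw [Finset.sum_congr rfl hterm]
        norm_cast
      rw [hstep, conv_coeff f g ((N : ℤ) - n), ← hg]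
      by_cases hn : 0 ≤ (N : ℤ) - n
      · rw [if_pos hn]
        have : Cp.coeff ((N : ℤ) - n).toNat = cZ n := by
          rw [hCpcoeff]
          congr 1
          omega
        rw [this]
      · rw [if_neg hn]
        rw [hN n (by omega)]
    rw [hexp, hgconv, ← hcZ n]
    ring
  -- Step 8: decay of y
  have hgfin : {m : ℤ | gtil m ≠ 0}.Finite := by
    apply (Set.finite_Icc ((N : ℤ) - g.natDegree) (N : ℤ)).subset
    intro m hmne
    simp only [Set.mem_setOf_eq, hgtil, hgext] at hmne
    by_cases hm0 : 0 ≤ (N : ℤ) - m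
    · rw [if_pos hm0] at hmne
      have hcoeffne : g.coeff ((N : ℤ) - m).toNat ≠ 0 := by exact_mod_cast hmne
      have hle := Polynomial.le_natDegree_of_ne_zero hcoeffne
      simp only [Set.mem_Icc]
      omega
    · rw [if_neg hm0] at hmne
      norm_num at hmne
  have hgdecay : Tendsto gtil cofinite (nhds 0) := by
    apply (tendsto_const_nhds : Tendsto (fun _ : ℤ => (0 : ℝ)) cofinite (nhds 0)).congr'
    rw [Filter.eventuallyEq_iff_exists_mem]
    exact ⟨{m | gtil m ≠ 0}ᶜ, hgfin.compl_mem_cofinite, fun m hmem => by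
      simpa using (not_not.mp hmem).symm⟩
  have hydecay : Tendsto y cofinite (nhds 0) := by
    have := hxt0.sub hgdecay
    simpa using this
  -- Step 9: complexify and conclude y = 0
  set fC : Polynomial ℂ := f.map (Int.castRingHom ℂ) with hfC
  have hC0 : fC.coeff 0 ≠ 0 := by
    rw [hfC, Polynomial.coeff_map]
    simpa using h0
  set yC : ℤ → ℂ := fun m => ((y m : ℝ) : ℂ) with hyC
  have hyCdecay : Tendsto yC cofinite (nhds 0) := by
    have := (Complex.continuous_ofReal.tendsto 0).comp hydecay
    simpa [hyC, Function.comp_def] using this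
  have hsolC : ∀ n : ℤ, seqOp fC yC n = 0 := by
    intro n
    rw [show seqOp fC yC n = ∑ k ∈ Finset.range (d + 1), (f.coeff k : ℂ) * yC (n + (k : ℤ))
      from seqOp_map_cast f yC n]
    have := congrArg (fun r : ℝ => (r : ℂ)) (hsolR n)
    rw [show seqOp fR y n = ∑ k ∈ Finset.range (d + 1), (f.coeff k : ℝ) * y (n + (k : ℤ))
      from seqOp_map_cast f y n] at this
    simpa [hyC] using this
  have hyzero : ∀ n : ℤ, y n = 0 := by
    intro n
    have hz := zero_of_decay_sol fC hC0 yC hyCdecay hsolC n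
    have hz2 : ((y n : ℝ) : ℂ) = 0 := hz
    exact_mod_cast hz2
  -- Step 10: conclude x = 0
  funext n
  have hxg : xt n = (gext ((N : ℤ) - n) : ℝ) := by
    have := hyzero n
    rw [hy] at this
    simp only [sub_eq_zero] at this
    rw [this, hgtil]
  have : x n = (((gext ((N : ℤ) - n) : ℤ) : ℝ) : Torus) := by
    rw [← hlift n, hxg]
  rw [this]
  show _ = (0 : ℤ → Torus) n
  rw [Pi.zero_apply, AddCircle.coe_eq_zero_iff]
  exact ⟨gext ((N : ℤ) - n), by rw [zsmul_eq_mul, mul_one]⟩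


end
end

section
/- Suppose f is irreducible in ℤ[u^{±1}], noncyclotomic, and hyperbolic. Then: (1) for every v ∈ ℓ^∞(ℤ,ℤ) the series ξ̄(v) = Σ_{n∈ℤ} v_n σ̄^{−n}(w^Δ) converges coordinatewise absolutely to an element of W_f, and v ↦ ξ̄(v) is an additive, shift-equivariant map with f(σ̄)(ξ̄(v)) = v for all v; consequently V_f = f(σ̄)(W_f) equals all of ℓ^∞(ℤ,ℤ). (2) The map ξ = ρ ∘ ξ̄ : ℓ^∞(ℤ,ℤ) → X_f is a surjective, shift-equivariant group homomorphism whose kernel is f(σ̄)(ℓ^∞(ℤ,ℤ)). -/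
open Filter Topology Polynomial

noncomputable section

/-- The shift `σ̄` on real sequences. -/
def shiftR (w : ℤ → ℝ) : ℤ → ℝ := fun n => w (n + 1)

/-- The shift on integer sequences. -/
def shiftZseq (v : ℤ → ℤ) : ℤ → ℤ := fun n => v (n + 1)

/-- Bounded integer sequences. -/
def BddZ (v : ℤ → ℤ) : Prop := ∃ B : ℤ, ∀ n, |v n| ≤ B

/-- `w^Δ`: bounded, `f(σ̄) w = v^Δ`, `w_n → 0` as `|n| → ∞`. -/
def IsWdelta (f : Polynomial ℤ) (w : ℤ → ℝ) : Prop :=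
  Bdd w ∧ fsR f w = vDelta ∧ Tendsto w cofinite (nhds 0)

/-- `ξ̄(v)_k = ∑_{n∈ℤ} v_n w^Δ_{k-n}`, i.e. `ξ̄(v) = ∑_n v_n σ̄^{-n} w^Δ`. -/
def xiBar (wd : ℤ → ℝ) (v : ℤ → ℤ) : ℤ → ℝ :=
  fun k => ∑' n : ℤ, (v n : ℝ) * wd (k - n)


def Complex.abs : AbsoluteValue ℂ ℝ := NormedField.toAbsoluteValue ℂ

lemma Complex.norm_eq_abs (z : ℂ) : ‖z‖ = Complex.abs z := rfl

lemma Complex.abs_ofReal (r : ℝ) : Complex.abs (r : ℂ) = |r| := by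
  show ‖(r : ℂ)‖ = |r|
  simp

namespace XiAux

def S : Module.End ℂ (ℤ → ℂ) :=
  { toFun := fun w n => w (n+1), map_add' := by intros; rfl, map_smul' := by intros; rfl }

lemma S_pow (w : ℤ → ℂ) (i : ℕ) (n : ℤ) : (S^i) w n = w (n + i) := by
  induction i generalizing w n with
  | zero => simp
  | succ i ih =>
    rw [pow_succ, Module.End.mul_apply, ih]
    show w (n + i + 1) = _
    congr 1; push_cast; ring

lemma aeval_S_apply (p : ℂ[X]) (w : ℤ → ℂ) (n : ℤ) :
    (aeval S p) w n = ∑ k ∈ Finset.range (p.natDegree+1), p.coeff k * w (n + k) := by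
  rw [Polynomial.aeval_eq_sum_range]
  rw [LinearMap.coe_sum, Finset.sum_apply, Finset.sum_apply]
  refine Finset.sum_congr rfl fun k _ => ?_
  rw [LinearMap.smul_apply]
  show p.coeff k * (S^k) w n = _
  rw [S_pow]

lemma aeval_X_sub_C (θ : ℂ) (w : ℤ → ℂ) (n : ℤ) :
    (aeval S (X - C θ)) w n = w (n+1) - θ * w n := by
  rw [map_sub, LinearMap.sub_apply, Pi.sub_apply, aeval_X, aeval_C]
  rfl

def BddC (w : ℤ → ℂ) : Prop := ∃ B : ℝ, ∀ n, Complex.abs (w n) ≤ B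

def prodP (l : List ℂ) : ℂ[X] := (l.map (fun θ => X - C θ)).prod

lemma prodP_cons (θ : ℂ) (l : List ℂ) : prodP (θ::l) = (X - C θ) * prodP l := by
  simp [prodP]

lemma bddC_aeval (p : ℂ[X]) (w : ℤ → ℂ) (hw : BddC w) : BddC (aeval S p w) := by
  obtain ⟨B, hB⟩ := hw
  refine ⟨(∑ k ∈ Finset.range (p.natDegree+1), Complex.abs (p.coeff k)) * B, fun n => ?_⟩
  rw [aeval_S_apply, Finset.sum_mul]
  refine (Complex.abs.sum_le _ _).trans (Finset.sum_le_sum fun k _ => ?_)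
  rw [map_mul]
  have hB0 : 0 ≤ B := le_trans (Complex.abs.nonneg _) (hB 0)
  exact mul_le_mul_of_nonneg_left (hB _) (Complex.abs.nonneg _)

lemma scalar_zero (θ : ℂ) (hθ : Complex.abs θ ≠ 1) (e : ℤ → ℂ) (he : BddC e)
    (h : ∀ n, e (n+1) = θ * e n) : e = 0 := by
  obtain ⟨B, hB⟩ := he
  funext n
  rcases lt_or_gt_of_ne hθ with hlt | hgt
  · have key : ∀ k : ℕ, ∀ m : ℤ, e m = θ^k * e (m - k) := by
      intro k
      induction k with
      | zero => intro m; simp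
      | succ k ih =>
        intro m
        have h2 : e (m - k) = θ * e (m - k - 1) := by
          have := h (m - k - 1); rw [sub_add_cancel] at this; exact this
        rw [ih m, h2, pow_succ]
        have : m - (k+1 : ℕ) = m - k - 1 := by push_cast; ring
        rw [this]; ring
    have hbd : ∀ k : ℕ, Complex.abs (e n) ≤ (Complex.abs θ)^k * B := by
      intro k
      rw [key k n, map_mul, map_pow]
      exact mul_le_mul_of_nonneg_left (hB _) (by positivity)
    have hlim : Filter.Tendsto (fun k : ℕ => (Complex.abs θ)^k * B) Filter.atTop (nhds 0) := by
      simpa using (tendsto_pow_atTop_nhds_zero_of_lt_one (Complex.abs.nonneg θ) hlt).mul_const B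
    have := ge_of_tendsto' hlim (fun k => hbd k)
    have h0 : Complex.abs (e n) = 0 := le_antisymm this (Complex.abs.nonneg _)
    exact Complex.abs.eq_zero.1 h0
  · have key : ∀ k : ℕ, ∀ m : ℤ, e (m + k) = θ^k * e m := by
      intro k
      induction k with
      | zero => intro m; simp
      | succ k ih =>
        intro m
        have : m + (k+1 : ℕ) = (m + k) + 1 := by push_cast; ring
        rw [this, h, ih, pow_succ]; ring
    have hθ0 : (0:ℝ) < Complex.abs θ := lt_trans one_pos hgt
    have hbd : ∀ k : ℕ, Complex.abs (e n) ≤ ((Complex.abs θ)⁻¹)^k * B := by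
      intro k
      have h1 : (Complex.abs θ)^k * Complex.abs (e n) ≤ B := by
        rw [← map_pow, ← map_mul, ← key k n]; exact hB _
      have h2 : Complex.abs (e n) ≤ B / (Complex.abs θ)^k := by
        rw [le_div_iff₀ (by positivity)]; linarith [h1]
      rw [inv_pow]
      calc Complex.abs (e n) ≤ B / (Complex.abs θ)^k := h2
        _ = ((Complex.abs θ)^k)⁻¹ * B := by ring
    have hlim : Filter.Tendsto (fun k : ℕ => ((Complex.abs θ)⁻¹)^k * B) Filter.atTop (nhds 0) := by
      have : (Complex.abs θ)⁻¹ < 1 := inv_lt_one_of_one_lt₀ hgt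
      simpa using (tendsto_pow_atTop_nhds_zero_of_lt_one (by positivity) this).mul_const B
    have := ge_of_tendsto' hlim (fun k => hbd k)
    exact Complex.abs.eq_zero.1 (le_antisymm this (Complex.abs.nonneg _))

lemma prod_zero : ∀ l : List ℂ, (∀ θ ∈ l, Complex.abs θ ≠ 1) → ∀ d : ℤ → ℂ, BddC d →
    aeval S (prodP l) d = 0 → d = 0 := by
  intro l
  induction l with
  | nil =>
    intro _ d _ h
    simpa [prodP] using h
  | cons θ l ih =>
    intro hl d hd h
    set e := aeval S (prodP l) d with hedef
    have h' : ∀ n, e (n+1) = θ * e n := by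
      intro n
      have h2 : aeval S (prodP (θ::l)) d n = 0 := by rw [h]; rfl
      rw [prodP_cons, map_mul, Module.End.mul_apply, ← hedef, aeval_X_sub_C] at h2
      exact sub_eq_zero.1 h2
    have he0 : e = 0 := scalar_zero θ (hl θ (List.mem_cons_self)) e (bddC_aeval _ _ hd) h'
    exact ih (fun θ' h'' => hl θ' (List.mem_cons_of_mem _ h'')) d hd he0

def l1 (v : ℤ → ℂ) : Prop := Summable fun n => Complex.abs (v n)

lemma l1.bddC {v : ℤ → ℂ} (hv : l1 v) : BddC v :=
  ⟨∑' n, Complex.abs (v n), fun n => hv.le_tsum n (fun _ _ => Complex.abs.nonneg _)⟩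

def shearE (b : ℕ → ℤ) : ℕ × ℤ ≃ ℕ × ℤ where
  toFun p := (p.1, p.2 + b p.1)
  invFun p := (p.1, p.2 - b p.1)
  left_inv p := by simp
  right_inv p := by simp

lemma conv_l1 (A : ℕ → ℝ) (hA : Summable A) (h0 : ∀ k, 0 ≤ A k) (b : ℕ → ℤ) {v : ℤ → ℂ}
    (hv : l1 v) :
    (∀ n : ℤ, Summable fun k : ℕ => A k * Complex.abs (v (n + b k))) ∧
    Summable (fun n : ℤ => ∑' k : ℕ, A k * Complex.abs (v (n + b k))) := by
  have hF : Summable (fun p : ℕ × ℤ => A p.1 * Complex.abs (v p.2)) :=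
    hA.mul_of_nonneg hv h0 (fun _ => Complex.abs.nonneg _)
  have hF2 : Summable fun p : ℕ × ℤ => A p.1 * Complex.abs (v (p.2 + b p.1)) := by
    have := ((shearE b).summable_iff
      (f := fun p : ℕ × ℤ => A p.1 * Complex.abs (v p.2))).2 hF
    simpa [shearE, Function.comp_def] using this
  have hswap : Summable fun p : ℤ × ℕ => A p.2 * Complex.abs (v (p.1 + b p.2)) := by
    have := ((Equiv.prodComm ℤ ℕ).summable_iff
      (f := fun p : ℕ × ℤ => A p.1 * Complex.abs (v (p.2 + b p.1)))).2 hF2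
    simpa [Function.comp_def] using this
  have hres := (summable_prod_of_nonneg (f := fun p : ℤ × ℕ => A p.2 * Complex.abs (v (p.1 + b p.2)))
    (fun p => mul_nonneg (h0 _) (Complex.abs.nonneg _))).1 hswap
  exact ⟨hres.1, hres.2⟩

lemma summable_green {v : ℤ → ℂ} (a : ℕ → ℂ) (A : ℕ → ℝ) (hA : Summable A)
    (habs : ∀ k, Complex.abs (a k) = A k) (b : ℕ → ℤ) (hv : l1 v) :
    (∀ n : ℤ, Summable fun k : ℕ => a k * v (n + b k)) ∧
    l1 (fun n => ∑' k : ℕ, a k * v (n + b k)) := by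
  have h0 : ∀ k, 0 ≤ A k := fun k => (habs k) ▸ Complex.abs.nonneg _
  obtain ⟨hpt, hout⟩ := conv_l1 A hA h0 b hv
  have habs' : ∀ n k, Complex.abs (a k * v (n + b k)) = A k * Complex.abs (v (n + b k)) := by
    intro n k; rw [map_mul, habs]
  have hptC : ∀ n, Summable fun k : ℕ => a k * v (n + b k) := by
    intro n
    apply Summable.of_norm
    simp only [Complex.norm_eq_abs]
    exact (hpt n).congr (fun k => (habs' n k).symm)
  refine ⟨hptC, ?_⟩
  have hnorm : ∀ n : ℤ, Summable fun k : ℕ => ‖a k * v (n + b k)‖ := by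
    intro n
    simp only [Complex.norm_eq_abs]
    exact (hpt n).congr (fun k => (habs' n k).symm)
  apply Summable.of_nonneg_of_le (fun n => Complex.abs.nonneg _) (fun n => ?_) hout
  have h := norm_tsum_le_tsum_norm (hnorm n)
  simp only [Complex.norm_eq_abs] at h
  calc Complex.abs (∑' k : ℕ, a k * v (n + b k))
      ≤ ∑' k : ℕ, Complex.abs (a k * v (n + b k)) := h
    _ = ∑' k : ℕ, A k * Complex.abs (v (n + b k)) := tsum_congr (fun k => habs' n k)

def greenLt (θ : ℂ) (v : ℤ → ℂ) : ℤ → ℂ := fun n => ∑' k : ℕ, θ^k * v (n + (-1 - (k:ℤ)))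

def greenGt (θ : ℂ) (v : ℤ → ℂ) : ℤ → ℂ := fun n => -∑' k : ℕ, θ^(-1 - (k:ℤ)) * v (n + k)

lemma greenLt_spec {θ : ℂ} (hθ : Complex.abs θ < 1) {v : ℤ → ℂ} (hv : l1 v) :
    l1 (greenLt θ v) ∧ ∀ n, greenLt θ v (n+1) - θ * greenLt θ v n = v n := by
  have hA : Summable fun k : ℕ => (Complex.abs θ)^k :=
    summable_geometric_of_lt_one (Complex.abs.nonneg θ) hθ
  have habs : ∀ k : ℕ, Complex.abs (θ^k) = (Complex.abs θ)^k := fun k => map_pow _ _ _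
  obtain ⟨hpt, hl1⟩ := summable_green (fun k => θ^k) _ hA habs (fun k => -1 - k) hv
  constructor
  · exact hl1
  · intro n
    have h1 : greenLt θ v (n+1) = v n + ∑' k : ℕ, θ^(k+1) * v (n + (-1 - (k:ℤ))) := by
      have hs : Summable fun k : ℕ => θ^k * v (n - (k:ℤ)) :=
        (hpt (n+1)).congr (fun k => by congr 2; ring)
      calc greenLt θ v (n+1) = ∑' k : ℕ, θ^k * v (n - (k:ℤ)) :=
            tsum_congr (fun k => by congr 2; ring)
        _ = θ^(0:ℕ) * v (n - ((0:ℕ):ℤ)) + ∑' k : ℕ, θ^(k+1) * v (n - ((k+1:ℕ):ℤ)) :=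
            hs.tsum_eq_zero_add
        _ = v n + ∑' k : ℕ, θ^(k+1) * v (n + (-1 - (k:ℤ))) := by
            rw [pow_zero, one_mul]
            congr 1
            · congr 1; simp
            · exact tsum_congr (fun k => by congr 2; push_cast; ring)
    have h2 : θ * greenLt θ v n = ∑' k : ℕ, θ^(k+1) * v (n + (-1 - (k:ℤ))) := by
      rw [greenLt, ← tsum_mul_left]
      exact tsum_congr (fun k => by rw [← mul_assoc, ← pow_succ'])
    rw [h1, h2]; ring

lemma greenGt_spec {θ : ℂ} (hθ : 1 < Complex.abs θ) {v : ℤ → ℂ} (hv : l1 v) :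
    l1 (greenGt θ v) ∧ ∀ n, greenGt θ v (n+1) - θ * greenGt θ v n = v n := by
  have hθ0 : θ ≠ 0 := by
    intro h; rw [h] at hθ; simp at hθ; linarith
  have hr : (Complex.abs θ)⁻¹ < 1 := inv_lt_one_of_one_lt₀ hθ
  have hr0 : (0:ℝ) ≤ (Complex.abs θ)⁻¹ := inv_nonneg.2 (Complex.abs.nonneg _)
  have hA : Summable fun k : ℕ => ((Complex.abs θ)⁻¹)^(k+1) := by
    apply Summable.congr ((summable_geometric_of_lt_one hr0 hr).mul_left (Complex.abs θ)⁻¹)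
    intro k; rw [pow_succ']
  have habs : ∀ k : ℕ, Complex.abs (θ^(-1 - (k:ℤ))) = ((Complex.abs θ)⁻¹)^(k+1) := by
    intro k
    have e : (-1 - (k:ℤ)) = -(((k+1:ℕ):ℤ)) := by push_cast; ring
    rw [map_zpow₀, e, zpow_neg, zpow_natCast, inv_pow]
  obtain ⟨hpt, hl1⟩ := summable_green (fun k => θ^(-1 - (k:ℤ))) _ hA habs (fun k => (k:ℤ)) hv
  constructor
  · apply Summable.congr hl1
    intro n; simp [greenGt]
  · intro n
    have hmul : ∀ k : ℕ, θ * θ^(-1-(k:ℤ)) = θ^(-(k:ℤ)) := by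
      intro k
      have e : (-(k:ℤ)) = 1 + (-1 - (k:ℤ)) := by ring
      rw [e, zpow_add₀ hθ0, zpow_one]
    have hs : Summable fun k : ℕ => θ^(-(k:ℤ)) * v (n + k) := by
      apply ((hpt n).mul_left θ).congr
      intro k; rw [← mul_assoc, hmul]
    have h2 : θ * greenGt θ v n = -∑' k : ℕ, θ^(-(k:ℤ)) * v (n + k) := by
      show θ * -(∑' k : ℕ, θ^(-1-(k:ℤ)) * v (n + k)) = _
      rw [mul_neg, ← tsum_mul_left]
      congr 1
      exact tsum_congr fun k => by rw [← mul_assoc, hmul]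
    have h3 : ∑' k : ℕ, θ^(-(k:ℤ)) * v (n + k)
        = v n + ∑' k : ℕ, θ^(-1-(k:ℤ)) * v (n + 1 + k) := by
      rw [hs.tsum_eq_zero_add]
      congr 1
      · simp
      · refine tsum_congr fun k => ?_
        have e1 : (-(((k+1:ℕ)):ℤ)) = -1 - (k:ℤ) := by push_cast; ring
        have e2 : n + ((k+1:ℕ):ℤ) = n + 1 + (k:ℤ) := by push_cast; ring
        rw [e1, e2]
    have h1 : greenGt θ v (n+1) = -∑' k : ℕ, θ^(-1-(k:ℤ)) * v (n + 1 + k) := rfl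
    rw [h1, h2, h3]; ring

lemma exists_sol : ∀ l : List ℂ, (∀ θ ∈ l, Complex.abs θ ≠ 1) → ∀ v : ℤ → ℂ, l1 v →
    ∃ g : ℤ → ℂ, l1 g ∧ aeval S (prodP l) g = v := by
  intro l
  induction l with
  | nil =>
    intro _ v hv
    refine ⟨v, hv, ?_⟩
    simp [prodP]
  | cons θ l ih =>
    intro hl v hv
    have hθ := hl θ (List.mem_cons_self)
    have he : ∃ e : ℤ → ℂ, l1 e ∧ ∀ n, e (n+1) - θ * e n = v n := by
      rcases lt_or_gt_of_ne hθ with hlt | hgt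
      · obtain ⟨h1, h2⟩ := greenLt_spec hlt hv
        exact ⟨greenLt θ v, h1, h2⟩
      · obtain ⟨h1, h2⟩ := greenGt_spec hgt hv
        exact ⟨greenGt θ v, h1, h2⟩
    obtain ⟨e, hel1, hee⟩ := he
    obtain ⟨g, hg1, hg2⟩ := ih (fun θ' h' => hl θ' (List.mem_cons_of_mem _ h')) e hel1
    refine ⟨g, hg1, ?_⟩
    funext n
    rw [prodP_cons, map_mul, Module.End.mul_apply, hg2, aeval_X_sub_C]
    exact hee n

lemma key (f : Polynomial ℤ) (hlead : f.leadingCoeff ≠ 0)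
    (hhyp : ∀ θ : ℂ, Polynomial.aeval θ f = 0 → Complex.abs θ ≠ 1) :
    (∀ wd : ℤ → ℝ, Bdd wd → fsR f wd = vDelta → Summable fun n => |wd n|) ∧
    (∀ w1 w2 : ℤ → ℝ, Bdd w1 → Bdd w2 → (∀ n, fsR f w1 n = fsR f w2 n) → w1 = w2) := by
  set fC := f.map (Int.castRingHom ℂ) with hfCdef
  have hf0 : f ≠ 0 := leadingCoeff_ne_zero.1 hlead
  have hfC0 : fC ≠ 0 := by
    rw [hfCdef, Ne, Polynomial.map_eq_zero_iff (f := Int.castRingHom ℂ) Int.cast_injective]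
    exact hf0
  have hdeg : fC.natDegree = f.natDegree :=
    Polynomial.natDegree_map_eq_of_injective Int.cast_injective f
  have hcard : fC.roots.card = fC.natDegree :=
    (Polynomial.splits_iff_card_roots).1 (IsAlgClosed.splits fC)
  set l := fC.roots.toList with hldef
  have hLprod : prodP l = (fC.roots.map fun a => X - C a).prod := by
    conv_rhs => rw [← Multiset.coe_toList fC.roots]
    rw [Multiset.map_coe, Multiset.prod_coe]
    rfl
  have hfact : C fC.leadingCoeff * prodP l = fC := by
    rw [hLprod]
    exact Polynomial.C_leadingCoeff_mul_prod_multiset_X_sub_C hcard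
  have hroots : ∀ θ ∈ l, Complex.abs θ ≠ 1 := by
    intro θ hθ
    have hmem : θ ∈ fC.roots := by rwa [hldef, Multiset.mem_toList] at hθ
    have hroot : Polynomial.aeval θ f = 0 := by
      have := (Polynomial.mem_roots hfC0).1 hmem
      rw [Polynomial.IsRoot] at this
      rw [Polynomial.aeval_def, ← Polynomial.eval_map]
      rwa [show algebraMap ℤ ℂ = Int.castRingHom ℂ from rfl]
    exact hhyp θ hroot
  have hlcC : fC.leadingCoeff ≠ 0 := leadingCoeff_ne_zero.2 hfC0
  have haevalC : ∀ (w : ℤ → ℝ) (n : ℤ),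
      (aeval S fC) (fun m => ((w m : ℝ) : ℂ)) n = ((fsR f w n : ℝ) : ℂ) := by
    intro w n
    rw [aeval_S_apply, fsR, hdeg]
    push_cast
    refine Finset.sum_congr rfl fun k _ => ?_
    rw [hfCdef, Polynomial.coeff_map]
    simp only [eq_intCast]
  have hsmul : ∀ d : ℤ → ℂ, aeval S fC d = fC.leadingCoeff • (aeval S (prodP l) d) := by
    intro d
    conv_lhs => rw [← hfact]
    rw [map_mul, Module.End.mul_apply, aeval_C, Module.algebraMap_end_apply]
  have huniq : ∀ d : ℤ → ℂ, BddC d → aeval S fC d = 0 → d = 0 := by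
    intro d hb h
    rw [hsmul] at h
    have := (smul_eq_zero.1 h).resolve_left hlcC
    exact prod_zero l hroots d hb this
  constructor
  · -- summability of wd
    intro wd hb hfs
    have hδ : l1 (fun n : ℤ => if n = 0 then (1:ℂ) else 0) := by
      apply summable_of_ne_finset_zero (s := ({0} : Finset ℤ))
      intro n hn
      simp only [Finset.mem_singleton] at hn
      simp [hn]
    obtain ⟨g0, hg0, hg0e⟩ := exists_sol l hroots (fun n : ℤ => if n = 0 then (1:ℂ) else 0) hδ
    set g : ℤ → ℂ := fC.leadingCoeff⁻¹ • g0 with hgdef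
    have hg : l1 g := by
      apply ((hg0.mul_left (Complex.abs fC.leadingCoeff⁻¹))).congr
      intro n
      rw [hgdef, Pi.smul_apply, smul_eq_mul, map_mul]
    have hge : aeval S fC g = (fun n : ℤ => if n = 0 then (1:ℂ) else 0) := by
      rw [hsmul, hgdef, map_smul, smul_smul, hg0e, mul_inv_cancel₀ hlcC, one_smul]
    set d : ℤ → ℂ := (fun m => ((wd m : ℝ) : ℂ)) - g with hddef
    have hdb : BddC d := by
      obtain ⟨B1, hB1⟩ := hb
      obtain ⟨B2, hB2⟩ := hg.bddC
      refine ⟨B1 + B2, fun n => ?_⟩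
      calc Complex.abs (d n) ≤ Complex.abs ((wd n : ℂ)) + Complex.abs (g n) := by
            rw [hddef]; exact (Complex.abs.sub_le_add _ _)
        _ ≤ B1 + B2 := by
            rw [Complex.abs_ofReal]
            exact add_le_add (hB1 n) (hB2 n)
    have hde : aeval S fC d = 0 := by
      rw [hddef, map_sub, hge]
      funext n
      rw [Pi.sub_apply, haevalC, hfs, Pi.zero_apply]
      show ((vDelta n : ℝ) : ℂ) - (if n = 0 then (1:ℂ) else 0) = 0
      by_cases h : n = 0 <;> simp [vDelta, h]
    have hd0 := huniq d hdb hde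
    have heq : ∀ n, (wd n : ℂ) = g n := by
      intro n
      have := congrFun hd0 n
      rw [hddef, Pi.sub_apply, Pi.zero_apply] at this
      linear_combination this
    apply hg.congr
    intro n
    rw [← heq n, Complex.abs_ofReal]
  · -- uniqueness
    intro w1 w2 h1 h2 heq
    set d : ℤ → ℂ := (fun m => ((w1 m : ℝ) : ℂ)) - (fun m => ((w2 m : ℝ) : ℂ)) with hddef
    have hdb : BddC d := by
      obtain ⟨B1, hB1⟩ := h1
      obtain ⟨B2, hB2⟩ := h2
      refine ⟨B1 + B2, fun n => ?_⟩
      calc Complex.abs (d n) ≤ Complex.abs ((w1 n : ℂ)) + Complex.abs ((w2 n : ℂ)) :=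
            Complex.abs.sub_le_add _ _
        _ ≤ B1 + B2 := by
            rw [Complex.abs_ofReal, Complex.abs_ofReal]
            exact add_le_add (hB1 n) (hB2 n)
    have hde : aeval S fC d = 0 := by
      rw [hddef, map_sub]
      funext n
      rw [Pi.sub_apply, Pi.zero_apply, haevalC, haevalC, heq n, sub_self]
    have hd0 := huniq d hdb hde
    funext n
    have := congrFun hd0 n
    rw [hddef, Pi.sub_apply, Pi.zero_apply] at this
    have : ((w1 n : ℝ) : ℂ) = ((w2 n : ℝ) : ℂ) := by linear_combination this
    exact_mod_cast this

def phi : ℝ →+ Torus := QuotientAddGroup.mk' _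

lemma phi_eq (x : ℝ) : phi x = (x : Torus) := rfl

lemma coe_int_torus (m : ℤ) : ((m:ℝ) : Torus) = 0 := by
  rw [AddCircle.coe_eq_zero_iff]
  exact ⟨m, by simp⟩

lemma torus_eq_zero {x : ℝ} (h : (x : Torus) = 0) : ∃ m : ℤ, ((m : ℤ) : ℝ) = x := by
  rw [AddCircle.coe_eq_zero_iff] at h
  obtain ⟨m, hm⟩ := h
  exact ⟨m, by simpa using hm⟩

lemma rho_fsR (f : Polynomial ℤ) (w : ℤ → ℝ) (n : ℤ) :
    fsT f (rhoT w) n = ((fsR f w n : ℝ) : Torus) := by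
  rw [fsT, fsR, ← phi_eq, map_sum]
  refine Finset.sum_congr rfl fun k _ => ?_
  rw [show ((f.coeff k : ℝ) * w (n+(k:ℤ))) = f.coeff k • w (n+(k:ℤ)) from (zsmul_eq_mul _ _).symm,
    map_zsmul]
  rfl

lemma lift_torus (t : Torus) : ∃ r : ℝ, |r| ≤ 1 ∧ (r : Torus) = t := by
  induction t using QuotientAddGroup.induction_on with
  | H y =>
    refine ⟨Int.fract y, ?_, ?_⟩
    · rw [abs_of_nonneg (Int.fract_nonneg y)]
      exact le_of_lt (Int.fract_lt_one y)
    · show ((Int.fract y : ℝ) : Torus) = _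
      rw [Int.fract, ← phi_eq, map_sub, phi_eq, phi_eq, coe_int_torus, sub_zero]

end XiAux

set_option maxHeartbeats 1600000

/-- properties of the homoclinic linearization map `ξ̄` and of
`ξ = ρ ∘ ξ̄` in the hyperbolic case. -/
theorem xiBar_properties (f : Polynomial ℤ) (hm : 1 ≤ f.natDegree)
    (hlead : 0 < f.leadingCoeff) (h0 : f.coeff 0 ≠ 0)
    (hirr : Irreducible (Polynomial.toLaurent f)) (hnc : Noncyclotomic f)
    (hhyp : ∀ θ : ℂ, Polynomial.aeval θ f = 0 → ‖θ‖ ≠ 1)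
    (wd : ℤ → ℝ) (hwd : IsWdelta f wd) :
    -- (1) the series converges coordinatewise absolutely, to an element of `W_f`
    (∀ v : ℤ → ℤ, BddZ v → ∀ k : ℤ, Summable fun n : ℤ => |(v n : ℝ) * wd (k - n)|) ∧
    (∀ v : ℤ → ℤ, BddZ v → Bdd (xiBar wd v)) ∧
    -- `ξ̄` is additive and shift-equivariant
    (∀ v v' : ℤ → ℤ, BddZ v → BddZ v' →
      xiBar wd (fun n => v n + v' n) = fun k => xiBar wd v k + xiBar wd v' k) ∧
    (∀ v : ℤ → ℤ, BddZ v → xiBar wd (shiftZseq v) = shiftR (xiBar wd v)) ∧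
    -- `f(σ̄)(ξ̄(v)) = v`
    (∀ v : ℤ → ℤ, BddZ v → ∀ n : ℤ, fsR f (xiBar wd v) n = (v n : ℝ)) ∧
    -- consequently `V_f = f(σ̄)(W_f)` is all of `ℓ^∞(ℤ,ℤ)`
    (∀ v : ℤ → ℤ, BddZ v → ∃ w : ℤ → ℝ, Bdd w ∧ ∀ n, fsR f w n = (v n : ℝ)) ∧
    -- (2) `ξ = ρ ∘ ξ̄` maps into `X_f`, is surjective onto `X_f`,
    (∀ v : ℤ → ℤ, BddZ v → rhoT (xiBar wd v) ∈ Xf f) ∧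
    (∀ x ∈ Xf f, ∃ v : ℤ → ℤ, BddZ v ∧ rhoT (xiBar wd v) = x) ∧
    -- and its kernel is `f(σ̄)(ℓ^∞(ℤ,ℤ))`
    (∀ v : ℤ → ℤ, BddZ v → (rhoT (xiBar wd v) = 0 ↔
      ∃ u : ℤ → ℤ, BddZ u ∧ ∀ n, (v n : ℝ) = fsR f (fun m => (u m : ℝ)) n)) := by
  classical
  obtain ⟨hwb, hwfs, _⟩ := hwd
  have hlead' : f.leadingCoeff ≠ 0 := ne_of_gt hlead
  obtain ⟨hsum_wd, huni⟩ := XiAux.key f hlead' hhyp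
  have hsum : Summable fun n : ℤ => |wd n| := hsum_wd wd hwb hwfs
  have hS0 : ∀ k : ℤ, Summable fun n : ℤ => |wd (k - n)| := by
    intro k
    have := ((Equiv.subLeft k).summable_iff (f := fun n : ℤ => |wd n|)).2 hsum
    simpa [Function.comp_def] using this
  have h1a : ∀ v : ℤ → ℤ, BddZ v → ∀ k : ℤ, Summable fun n : ℤ => |(v n : ℝ) * wd (k - n)| := by
    intro v hv k
    obtain ⟨B, hB⟩ := hv
    apply Summable.of_nonneg_of_le (fun n => abs_nonneg _) (fun n => ?_) ((hS0 k).mul_left (B:ℝ))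
    rw [abs_mul]
    have hvB : |(v n : ℝ)| ≤ (B : ℝ) := by exact_mod_cast hB n
    exact mul_le_mul_of_nonneg_right hvB (abs_nonneg _)
  have hsummable : ∀ v : ℤ → ℤ, BddZ v → ∀ k : ℤ,
      Summable fun n : ℤ => (v n : ℝ) * wd (k - n) :=
    fun v hv k => summable_abs_iff.1 (h1a v hv k)
  have h1b : ∀ v : ℤ → ℤ, BddZ v → Bdd (xiBar wd v) := by
    intro v hv
    obtain ⟨B, hB⟩ := hv
    refine ⟨(B:ℝ) * ∑' n : ℤ, |wd n|, fun k => ?_⟩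
    have hns : Summable fun n : ℤ => ‖(v n : ℝ) * wd (k - n)‖ := by
      simpa only [Real.norm_eq_abs] using h1a v ⟨B, hB⟩ k
    have h1 : |xiBar wd v k| ≤ ∑' n : ℤ, |(v n : ℝ) * wd (k - n)| := by
      rw [xiBar]
      simpa only [Real.norm_eq_abs] using norm_tsum_le_tsum_norm hns
    refine h1.trans ?_
    have h2 : ∑' n : ℤ, |(v n : ℝ) * wd (k - n)| ≤ ∑' n : ℤ, (B:ℝ) * |wd (k - n)| := by
      apply Summable.tsum_le_tsum _ (h1a v ⟨B, hB⟩ k) ((hS0 k).mul_left (B:ℝ))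
      intro n
      rw [abs_mul]
      exact mul_le_mul_of_nonneg_right (by exact_mod_cast hB n) (abs_nonneg _)
    refine h2.trans ?_
    rw [tsum_mul_left]
    have h3 : ∑' n : ℤ, |wd (k - n)| = ∑' n : ℤ, |wd n| := by
      have := (Equiv.subLeft k).tsum_eq (fun n : ℤ => |wd n|)
      simpa using this
    rw [h3]
  have h1e : ∀ v : ℤ → ℤ, BddZ v → ∀ n : ℤ, fsR f (xiBar wd v) n = (v n : ℝ) := by
    intro v hv n
    rw [fsR]
    have step1 : ∀ k ∈ Finset.range (f.natDegree + 1),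
        (f.coeff k : ℝ) * xiBar wd v (n + (k:ℤ))
          = ∑' m : ℤ, (f.coeff k : ℝ) * ((v m : ℝ) * wd (n + (k:ℤ) - m)) := by
      intro k _
      rw [xiBar, tsum_mul_left]
    rw [Finset.sum_congr rfl step1,
      ← Summable.tsum_finsetSum (f := fun k m => (f.coeff k : ℝ) * ((v m : ℝ) * wd (n + (k:ℤ) - m)))
        (fun k _ => (hsummable v hv (n + (k:ℤ))).mul_left _)]
    have step2 : ∀ m : ℤ,
        (∑ k ∈ Finset.range (f.natDegree + 1),
          (f.coeff k : ℝ) * ((v m : ℝ) * wd (n + (k:ℤ) - m)))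
        = (v m : ℝ) * vDelta (n - m) := by
      intro m
      have hterm : ∀ k ∈ Finset.range (f.natDegree + 1),
          (f.coeff k : ℝ) * ((v m : ℝ) * wd (n + (k:ℤ) - m))
            = (v m : ℝ) * ((f.coeff k : ℝ) * wd ((n - m) + (k:ℤ))) := by
        intro k _
        have e : n + (k:ℤ) - m = (n - m) + (k:ℤ) := by ring
        rw [e]; ring
      rw [Finset.sum_congr rfl hterm, ← Finset.mul_sum]
      congr 1
      exact congrFun hwfs (n - m)
    rw [tsum_congr step2, tsum_eq_single n (fun m hm => ?_)]
    · simp [vDelta]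
    · have : n - m ≠ 0 := sub_ne_zero.2 (Ne.symm hm)
      simp [vDelta, this]
  have h1c : ∀ v v' : ℤ → ℤ, BddZ v → BddZ v' →
      xiBar wd (fun n => v n + v' n) = fun k => xiBar wd v k + xiBar wd v' k := by
    intro v v' hv hv'
    funext k
    show (∑' n : ℤ, ((v n + v' n : ℤ) : ℝ) * wd (k - n)) = _
    rw [xiBar, xiBar, ← Summable.tsum_add (hsummable v hv k) (hsummable v' hv' k)]
    exact tsum_congr fun n => by push_cast; ring
  have h1d : ∀ v : ℤ → ℤ, BddZ v → xiBar wd (shiftZseq v) = shiftR (xiBar wd v) := by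
    intro v hv
    funext k
    show (∑' n : ℤ, ((shiftZseq v) n : ℝ) * wd (k - n)) = ∑' m : ℤ, (v m : ℝ) * wd (k + 1 - m)
    have heq := (Equiv.addRight (1:ℤ)).tsum_eq (fun m : ℤ => (v m : ℝ) * wd (k + 1 - m))
    refine Eq.trans ?_ heq
    refine tsum_congr fun n => ?_
    show ((v (n+1) : ℝ)) * wd (k - n) = (v ((Equiv.addRight (1:ℤ)) n) : ℝ) * wd (k + 1 - ((Equiv.addRight (1:ℤ)) n))
    have : ((Equiv.addRight (1:ℤ)) n) = n + 1 := rfl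
    rw [this]
    congr 2
    ring
  have h2a : ∀ v : ℤ → ℤ, BddZ v → rhoT (xiBar wd v) ∈ Xf f := by
    intro v hv n
    rw [XiAux.rho_fsR, h1e v hv n, XiAux.coe_int_torus]
  have h2b : ∀ x ∈ Xf f, ∃ v : ℤ → ℤ, BddZ v ∧ rhoT (xiBar wd v) = x := by
    intro x hx
    choose w hw1 hw2 using fun n => XiAux.lift_torus (x n)
    have hwBdd : Bdd w := ⟨1, hw1⟩
    have hrho : rhoT w = x := funext hw2
    have hv0 : ∀ n, ∃ m : ℤ, ((m : ℤ) : ℝ) = fsR f w n := by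
      intro n
      apply XiAux.torus_eq_zero
      rw [← XiAux.rho_fsR, hrho]
      exact hx n
    choose v hv using hv0
    set C : ℝ := ∑ k ∈ Finset.range (f.natDegree + 1), |(f.coeff k : ℝ)| with hC
    have hfsRb : ∀ n, |fsR f w n| ≤ C := by
      intro n
      rw [fsR, hC]
      refine (Finset.abs_sum_le_sum_abs _ _).trans ?_
      refine Finset.sum_le_sum fun k _ => ?_
      rw [abs_mul]
      calc |(f.coeff k:ℝ)| * |w (n + (k:ℤ))| ≤ |(f.coeff k:ℝ)| * 1 :=
            mul_le_mul_of_nonneg_left (hw1 _) (abs_nonneg _)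
        _ = |(f.coeff k:ℝ)| := mul_one _
    have hvB : BddZ v := by
      refine ⟨⌈C⌉, fun n => ?_⟩
      have h1 : |(v n : ℝ)| ≤ C := by rw [hv n]; exact hfsRb n
      exact_mod_cast h1.trans (Int.le_ceil C)
    have hequal : xiBar wd v = w := by
      apply huni _ _ (h1b v hvB) hwBdd
      intro n
      rw [h1e v hvB n, hv n]
    exact ⟨v, hvB, by rw [hequal, hrho]⟩
  have h2c : ∀ v : ℤ → ℤ, BddZ v → (rhoT (xiBar wd v) = 0 ↔
      ∃ u : ℤ → ℤ, BddZ u ∧ ∀ n, (v n : ℝ) = fsR f (fun m => (u m : ℝ)) n) := by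
    intro v hv
    constructor
    · intro h
      have hmem : ∀ k, ∃ m : ℤ, ((m : ℤ) : ℝ) = xiBar wd v k := by
        intro k
        apply XiAux.torus_eq_zero
        have := congrFun h k
        rwa [Pi.zero_apply] at this
      choose u hu using hmem
      obtain ⟨B, hB⟩ := h1b v hv
      refine ⟨u, ⟨⌈B⌉, fun k => ?_⟩, fun n => ?_⟩
      · have h1 : |(u k : ℝ)| ≤ B := by rw [hu k]; exact hB k
        exact_mod_cast h1.trans (Int.le_ceil B)
      · have hfun : (fun m => ((u m : ℤ) : ℝ)) = xiBar wd v := funext hu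
        rw [hfun, h1e v hv n]
    · rintro ⟨u, hub, hu⟩
      have hcast : Bdd (fun m => ((u m : ℤ) : ℝ)) := by
        obtain ⟨B, hB⟩ := hub
        refine ⟨(B:ℝ), fun n => ?_⟩
        show |((u n : ℤ) : ℝ)| ≤ (B:ℝ)
        exact_mod_cast hB n
      have hequal : xiBar wd v = (fun m => ((u m : ℤ) : ℝ)) := by
        apply huni _ _ (h1b v hv) hcast
        intro n
        rw [h1e v hv n, hu n]
      funext k
      show ((xiBar wd v k : ℝ) : Torus) = 0
      rw [congrFun hequal k]
      exact XiAux.coe_int_torus (u k)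
  exact ⟨h1a, h1b, h1c, h1d, h1e,
    fun v hv => ⟨xiBar wd v, h1b v hv, h1e v hv⟩, h2a, h2b, h2c⟩

end
end
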